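/- arXiv:1208.5584 — 5 statements merged into one kernel-verified Lean document; each statement's English description precedes it below -/
import Mathlib

section
/- Let X be a chi-squared random variable with n degrees of freedom. Then for any x > 0: P(X − n ≥ 2√(nx) + 2x) ≤ exp(−x) and P(X − n ≤ −2√(nx)) ≤ exp(−x). -/
open MeasureTheory ProbabilityTheory Real Set


lemma LM_integrableOn_kernel {a s : ℝ} (ha : 0 < a) (hs : 0 < s) :
    IntegrableOn (fun y : ℝ => y ^ (a - 1) * Real.exp (-(s * y))) (Set.Ioi 0) := by
  have h := integrableOn_rpow_mul_exp_neg_mul_rpow (p := 1) (s := a - 1) (b := s)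
    (by linarith) one_pos hs
  refine h.congr_fun (fun y hy => ?_) measurableSet_Ioi
  simp only [Real.rpow_one]
  ring_nf

lemma LM_pdf_mul_exp_eq {a r t y : ℝ} (hy : 0 ≤ y) :
    gammaPDFReal a r y * Real.exp (t * y)
      = r ^ a / Real.Gamma a * (y ^ (a - 1) * Real.exp (-((r - t) * y))) := by
  rw [gammaPDFReal, if_pos hy, show -((r - t) * y) = -(r * y) + t * y by ring, Real.exp_add]
  ring

lemma LM_integrable_pdf_mul_exp {a r t : ℝ} (ha : 0 < a) (hr : 0 < r) (ht : t < r) :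
    Integrable (fun y : ℝ => gammaPDFReal a r y * Real.exp (t * y)) := by
  have hrt : 0 < r - t := by linarith
  have h1 : IntegrableOn (fun y : ℝ => gammaPDFReal a r y * Real.exp (t * y)) (Set.Ici 0) := by
    rw [integrableOn_Ici_iff_integrableOn_Ioi]
    have h2 : IntegrableOn
        (fun y : ℝ => r ^ a / Real.Gamma a * (y ^ (a - 1) * Real.exp (-((r - t) * y))))
        (Set.Ioi 0) := (LM_integrableOn_kernel ha hrt).const_mul _
    exact h2.congr_fun (fun y hy => (LM_pdf_mul_exp_eq (le_of_lt hy)).symm) measurableSet_Ioi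
  have h2 : IntegrableOn (fun y : ℝ => gammaPDFReal a r y * Real.exp (t * y)) (Set.Iio 0) := by
    have : IntegrableOn (fun _ : ℝ => (0:ℝ)) (Set.Iio 0) := integrableOn_zero
    exact this.congr_fun
      (fun y hy => by rw [gammaPDFReal, if_neg (not_le.mpr hy), zero_mul]) measurableSet_Iio
  have := h2.union h1
  rwa [Set.Iio_union_Ici, integrableOn_univ] at this

lemma LM_integral_pdf_mul_exp {a r t : ℝ} (ha : 0 < a) (hr : 0 < r) (ht : t < r) :
    ∫ y, gammaPDFReal a r y * Real.exp (t * y) = (r / (r - t)) ^ a := by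
  have hrt : 0 < r - t := by linarith
  rw [← setIntegral_eq_integral_of_forall_compl_eq_zero
    (s := Set.Ici 0) (fun y hy => by
      rw [gammaPDFReal, if_neg (by simpa using hy), zero_mul]),
    integral_Ici_eq_integral_Ioi,
    setIntegral_congr_fun measurableSet_Ioi
      (fun y hy => LM_pdf_mul_exp_eq (le_of_lt hy)),
    integral_const_mul, integral_rpow_mul_exp_neg_mul_Ioi ha hrt]
  rw [div_rpow (by norm_num) hrt.le, one_rpow, div_rpow hr.le hrt.le]
  field_simp [(Real.Gamma_pos_of_pos ha).ne', (Real.rpow_pos_of_pos hrt a).ne']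

lemma LM_mgf {Ω : Type*} [MeasurableSpace Ω] (P : Measure Ω) [IsProbabilityMeasure P]
    {a r : ℝ} (ha : 0 < a) (hr : 0 < r) {X : Ω → ℝ} (hX : Measurable X)
    (hdist : Measure.map X P = gammaMeasure a r) {t : ℝ} (ht : t < r) :
    Integrable (fun ω => Real.exp (t * X ω)) P ∧
      mgf X P t = (r / (r - t)) ^ a := by
  have hpdfm : Measurable (fun y : ℝ => (gammaPDFReal a r y).toNNReal) :=
    (measurable_gammaPDFReal a r).real_toNNReal
  have hmeas_eq : gammaMeasure a r
      = volume.withDensity (fun y => ((gammaPDFReal a r y).toNNReal : ENNReal)) := rfl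
  have hsmul : ∀ y : ℝ, (gammaPDFReal a r y).toNNReal • Real.exp (t * y)
      = gammaPDFReal a r y * Real.exp (t * y) := by
    intro y
    rw [NNReal.smul_def, Real.coe_toNNReal _ (gammaPDFReal_nonneg ha hr y), smul_eq_mul]
  have hint : Integrable (fun y : ℝ => Real.exp (t * y)) (gammaMeasure a r) := by
    rw [hmeas_eq, integrable_withDensity_iff_integrable_smul hpdfm]
    simp only [hsmul]
    exact LM_integrable_pdf_mul_exp ha hr ht
  have hintX : Integrable (fun ω => Real.exp (t * X ω)) P := by
    have := (integrable_map_measure (μ := P)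
      (f := X) (g := fun y : ℝ => Real.exp (t * y))
      (Measurable.aestronglyMeasurable (by fun_prop)) hX.aemeasurable).mp (by rwa [hdist])
    exact this
  refine ⟨hintX, ?_⟩
  have hmg : mgf X P t = ∫ y, Real.exp (t * y) ∂(Measure.map X P) := by
    have hme : Measurable fun y : ℝ => Real.exp (t * y) := by fun_prop
    exact (integral_map hX.aemeasurable hme.aestronglyMeasurable).symm
  rw [hmg, hdist, hmeas_eq, integral_withDensity_eq_integral_smul hpdfm]
  simp only [hsmul]
  exact LM_integral_pdf_mul_exp ha hr ht


lemma LM_log_one_sub_le {u : ℝ} (hu0 : 0 ≤ u) (hu1 : u < 1) :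
    Real.log (1 - u) ≤ -u - u ^ 2 / 2 := by
  set f : ℝ → ℝ := fun v => Real.log (1 - v) + v + v ^ 2 / 2 with hf
  have hcont : ContinuousOn f (Icc 0 u) := by
    refine ContinuousOn.add (ContinuousOn.add ?_ continuousOn_id) (by fun_prop)
    refine ContinuousOn.log (by fun_prop) (fun v hv => ?_)
    have := hv.2
    have : v < 1 := lt_of_le_of_lt this hu1
    rw [sub_ne_zero]; exact fun h => by simp [← h] at this
  have hderiv : ∀ v ∈ Ioo 0 u, HasDerivAt f (-(1 - v)⁻¹ + 1 + v) v := by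
    intro v hv
    have hv1 : v < 1 := lt_trans hv.2 hu1
    have h1 : HasDerivAt (fun v : ℝ => 1 - v) (-1) v := by
      simpa using (hasDerivAt_id v).const_sub 1
    have h2 : HasDerivAt (fun v : ℝ => Real.log (1 - v)) ((1 - v)⁻¹ * (-1)) v :=
      (Real.hasDerivAt_log (by linarith)).comp v h1
    have h3 : HasDerivAt (fun v : ℝ => v ^ 2 / 2) v v := by
      simpa using ((hasDerivAt_pow 2 v).div_const 2)
    have := (h2.add (hasDerivAt_id v)).add h3
    refine this.congr_deriv ?_
    ring
  have hmono : f u ≤ f 0 := by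
    rcases eq_or_lt_of_le hu0 with h | h
    · rw [← h]
    · have := antitoneOn_of_deriv_nonpos (convex_Icc 0 u) hcont
        (fun v hv => by
          rw [interior_Icc] at hv
          exact (hderiv v hv).differentiableAt.differentiableWithinAt)
        (fun v hv => by
          rw [interior_Icc] at hv
          rw [(hderiv v hv).deriv]
          have hv1 : v < 1 := lt_trans hv.2 hu1
          have h1v : 0 < 1 - v := by linarith
          have heq : -(1 - v)⁻¹ + 1 + v = -(v ^ 2 / (1 - v)) := by
            field_simp
            ring
          rw [heq, neg_nonpos]
          positivity)
      exact this (left_mem_Icc.mpr hu0) (right_mem_Icc.mpr hu0) hu0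
  simp only [hf, sub_zero, Real.log_one] at hmono
  nlinarith [hmono]

lemma LM_log_one_add_le {s : ℝ} (hs : 0 ≤ s) :
    Real.log (1 + 2 * s + 2 * s ^ 2) ≤ 2 * s := by
  rw [Real.log_le_iff_le_exp (by positivity)]
  have := Real.quadratic_le_exp_of_nonneg (x := 2 * s) (by positivity)
  nlinarith [this]

/-- The chi-squared distribution with `n` degrees of freedom, as the Gamma
distribution with shape `n/2` and rate `1/2`. -/
noncomputable def chiSqMeasure (n : ℕ) : Measure ℝ :=
  gammaMeasure (n / 2 : ℝ) (1 / 2 : ℝ)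

/-- **Laurent–Massart chi-squared tail bounds.** If `X ∼ χ²(n)` then for any `x > 0`,
`P(X − n ≥ 2√(nx) + 2x) ≤ exp(−x)` and `P(X − n ≤ −2√(nx)) ≤ exp(−x)`. -/
theorem chiSq_laurent_massart
    {Ω : Type*} [MeasurableSpace Ω] (P : Measure Ω) [IsProbabilityMeasure P]
    (n : ℕ) (hn : 0 < n) (X : Ω → ℝ) (hX : Measurable X)
    (hdist : Measure.map X P = chiSqMeasure n)
    (x : ℝ) (hx : 0 < x) :
    P {ω | X ω - n ≥ 2 * Real.sqrt (n * x) + 2 * x} ≤ ENNReal.ofReal (Real.exp (-x))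
    ∧ P {ω | X ω - n ≤ -(2 * Real.sqrt (n * x))} ≤ ENNReal.ofReal (Real.exp (-x)) := by
  have hdist' : Measure.map X P = gammaMeasure ((n : ℝ) / 2) (1 / 2 : ℝ) := hdist
  have ha : 0 < ((n : ℝ) / 2) := by positivity
  have hr : 0 < (1 / 2 : ℝ) := by norm_num
  set nn : ℝ := (n : ℝ) with hnn_def
  have hnn : 0 < nn := by rw [hnn_def]; exact_mod_cast hn
  set s : ℝ := Real.sqrt (x / nn) with hs_def
  have hs : 0 < s := Real.sqrt_pos.mpr (div_pos hx hnn)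
  have hs2 : nn * s ^ 2 = x := by
    rw [hs_def, Real.sq_sqrt (le_of_lt (div_pos hx hnn))]
    field_simp
  have hsq : Real.sqrt (nn * x) = nn * s := by
    rw [show nn * x = (nn * s) ^ 2 by nlinarith, Real.sqrt_sq (by positivity)]
  constructor
  · -- upper tail
    set u : ℝ := 2 * nn * s + 2 * nn * s ^ 2 with hu_def
    have hu : 0 < u := by positivity
    set ε : ℝ := nn + u with hε_def
    have hset : {ω | X ω - nn ≥ 2 * Real.sqrt (nn * x) + 2 * x} = {ω | ε ≤ X ω} := by
      ext ω
      simp only [Set.mem_setOf_eq, ge_iff_le, hε_def, hu_def, hsq]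
      constructor <;> intro <;> linarith [hs2]
    rw [hset]
    set t : ℝ := u / (2 * (nn + u)) with ht_def
    have hnu : 0 < nn + u := by positivity
    have ht0 : 0 ≤ t := by positivity
    have ht : t < 1 / 2 := by
      rw [ht_def, div_lt_iff₀ (by positivity)]
      linarith
    obtain ⟨hint, hmgf⟩ := LM_mgf P ha hr hX hdist' ht
    have hch := measure_ge_le_exp_mul_mgf (X := X) (μ := P) ε ht0 hint
    have hhalf : (1 : ℝ) / 2 - t = nn / (2 * (nn + u)) := by
      rw [ht_def]; field_simp; ring
    have hbase : (1 / 2 : ℝ) / (1 / 2 - t) = 1 + 2 * s + 2 * s ^ 2 := by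
      rw [hhalf, hu_def]
      field_simp
      ring
    have hmgf2 : mgf X P t = Real.exp (Real.log (1 + 2 * s + 2 * s ^ 2) * (nn / 2)) := by
      rw [hmgf, hbase, Real.rpow_def_of_pos (by positivity)]
    have htε : t * ε = u / 2 := by
      rw [ht_def, hε_def]; field_simp
    have hfinal : Real.exp (-t * ε) * mgf X P t ≤ Real.exp (-x) := by
      rw [hmgf2, ← Real.exp_add, Real.exp_le_exp, neg_mul, htε]
      have hlog := LM_log_one_add_le hs.le
      nlinarith [hlog, hnn, hs2]
    calc P {ω | ε ≤ X ω} = ENNReal.ofReal ((P {ω | ε ≤ X ω}).toReal) :=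
          (ENNReal.ofReal_toReal (measure_ne_top P _)).symm
      _ ≤ ENNReal.ofReal (Real.exp (-x)) :=
          ENNReal.ofReal_le_ofReal (le_trans hch hfinal)
  · -- lower tail
    set ε : ℝ := nn - 2 * nn * s with hε_def
    have hset : {ω | X ω - nn ≤ -(2 * Real.sqrt (nn * x))} = {ω | X ω ≤ ε} := by
      ext ω
      simp only [Set.mem_setOf_eq, hε_def, hsq]
      constructor <;> intro <;> linarith
    rw [hset]
    rcases le_or_gt (1 / 2 : ℝ) s with hcase | hcase
    · -- ε ≤ 0 : probability is zero
      have hε0 : ε ≤ 0 := by rw [hε_def]; nlinarith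
      have hmap : P {ω | X ω ≤ ε} = gammaMeasure ((n : ℝ) / 2) (1 / 2 : ℝ) (Iic ε) := by
        rw [← hdist', Measure.map_apply hX measurableSet_Iic]
        rfl
      have hzero : gammaMeasure ((n : ℝ) / 2) (1 / 2 : ℝ) (Iic ε) = 0 := by
        rw [gammaMeasure, withDensity_apply _ measurableSet_Iic]
        have hsub : Iic ε ⊆ Iic 0 := Iic_subset_Iic.mpr hε0
        refine le_antisymm (le_trans (lintegral_mono_set hsub) (le_of_eq ?_)) zero_le
        rw [setLIntegral_congr (Iio_ae_eq_Iic (a := (0:ℝ))).symm]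
        exact lintegral_gammaPDF_of_nonpos le_rfl
      rw [hmap, hzero]
      exact zero_le
    · -- s < 1/2 : Chernoff
      have h12 : 0 < 1 - 2 * s := by linarith
      set t : ℝ := -(s / (1 - 2 * s)) with ht_def
      have ht0 : t ≤ 0 := by rw [ht_def, neg_nonpos]; positivity
      have ht : t < 1 / 2 := by
        have : 0 ≤ s / (1 - 2 * s) := by positivity
        rw [ht_def]; linarith
      obtain ⟨hint, hmgf⟩ := LM_mgf P ha hr hX hdist' ht
      have hch := measure_le_le_exp_mul_mgf (X := X) (μ := P) ε ht0 hint
      have hbase : (1 / 2 : ℝ) / (1 / 2 - t) = 1 - 2 * s := by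
        rw [ht_def]; field_simp; ring
      have hmgf2 : mgf X P t = Real.exp (Real.log (1 - 2 * s) * (nn / 2)) := by
        rw [hmgf, hbase, Real.rpow_def_of_pos (by linarith)]
      have htε : -t * ε = nn * s := by
        rw [ht_def, hε_def]; field_simp; ring_nf; field_simp [show (1 - s*2) ≠ 0 by linarith]; ring
      have hfinal : Real.exp (-t * ε) * mgf X P t ≤ Real.exp (-x) := by
        rw [hmgf2, ← Real.exp_add, Real.exp_le_exp, htε]
        have hlog := LM_log_one_sub_le (u := 2 * s) (by positivity) (by linarith)
        nlinarith [hlog, hnn, hs2]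
      calc P {ω | X ω ≤ ε} = ENNReal.ofReal ((P {ω | X ω ≤ ε}).toReal) :=
            (ENNReal.ofReal_toReal (measure_ne_top P _)).symm
        _ ≤ ENNReal.ofReal (Real.exp (-x)) :=
            ENNReal.ofReal_le_ofReal (le_trans hch hfinal)
end

section
/- Let Z ∼ Beta(n/2, m/2). For sufficiently large m and n there is a constant c > 0 such that P(Z ≥ (n + c·n^{3/4})/(m + n − c·(m+n)^{3/4})) ≤ exp(−n^{1/2}) + exp(−(m+n)^{1/2}) and P(Z ≤ (n − c·n^{3/4})/(m + n + c·(m+n)^{3/4})) ≤ exp(−n^{1/2}) + exp(−(m+n)^{1/2}). -/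
open MeasureTheory ProbabilityTheory

/-- The Beta distribution on `(0,1)` with parameters `a, b > 0`, with density
`Γ(a+b)/(Γ(a)Γ(b)) · x^(a-1) (1-x)^(b-1)`. -/
noncomputable def betaMeasure (a b : ℝ) : Measure ℝ :=
  volume.withDensity fun x =>
    ENNReal.ofReal (if 0 < x ∧ x < 1 then
      Real.Gamma (a + b) / (Real.Gamma a * Real.Gamma b)
        * x ^ (a - 1) * (1 - x) ^ (b - 1) else 0)

lemma cpow_eq_ofReal {x y : ℝ} (hx : 0 ≤ x) : (x:ℂ) ^ ((y:ℝ):ℂ) = ((x ^ y : ℝ) : ℂ) :=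
  (Complex.ofReal_cpow hx y).symm

lemma complex_integrand_eq {p q x : ℝ} (hx0 : 0 ≤ x) (hx1 : x ≤ 1) :
    (x:ℂ) ^ ((p:ℂ) - 1) * (1 - (x:ℂ)) ^ ((q:ℂ) - 1) = ((x ^ (p-1) * (1-x) ^ (q-1) : ℝ) : ℂ) := by
  rw [show ((p:ℂ) - 1) = ((p - 1 : ℝ) : ℂ) by push_cast; ring,
      show ((q:ℂ) - 1) = ((q - 1 : ℝ) : ℂ) by push_cast; ring,
      show (1 - (x:ℂ)) = (((1 - x : ℝ)) : ℂ) by push_cast; ring,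
      cpow_eq_ofReal hx0, cpow_eq_ofReal (by linarith)]
  push_cast; ring

lemma real_beta_integrable {p q : ℝ} (hp : 0 < p) (hq : 0 < q) :
    IntegrableOn (fun x : ℝ => x ^ (p - 1) * (1 - x) ^ (q - 1)) (Set.Ioo 0 1) := by
  have h := Complex.betaIntegral_convergent (u := (p:ℂ)) (v := (q:ℂ)) (by simpa) (by simpa)
  have h2 : IntegrableOn (fun x : ℝ => ((x:ℂ) ^ ((p:ℂ) - 1) * (1 - (x:ℂ)) ^ ((q:ℂ) - 1)).re)
      (Set.Ioc 0 1) := by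
    have := h.1
    simpa [IntegrableOn, IntervalIntegrable, Set.uIoc_of_le (zero_le_one (α := ℝ))] using this.re
  refine ((h2.mono_set Set.Ioo_subset_Ioc_self).congr_fun ?_ measurableSet_Ioo)
  intro x hx
  simp [complex_integrand_eq (le_of_lt hx.1) (le_of_lt hx.2)]

lemma real_beta_integral {p q : ℝ} (hp : 0 < p) (hq : 0 < q) :
    ∫ x in Set.Ioo (0:ℝ) 1, x ^ (p - 1) * (1 - x) ^ (q - 1)
      = Real.Gamma p * Real.Gamma q / Real.Gamma (p + q) := by
  have h := Complex.Gamma_mul_Gamma_eq_betaIntegral (s := (p:ℂ)) (t := (q:ℂ)) (by simpa) (by simpa)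
  have hB : Complex.betaIntegral (p:ℂ) (q:ℂ)
      = ((∫ x in Set.Ioo (0:ℝ) 1, x ^ (p - 1) * (1 - x) ^ (q - 1) : ℝ) : ℂ) := by
    rw [Complex.betaIntegral]
    rw [intervalIntegral.integral_of_le (zero_le_one), ← integral_Ioc_eq_integral_Ioo]
    rw [show (∫ x in Set.Ioc (0:ℝ) 1, (x:ℂ) ^ ((p:ℂ) - 1) * (1 - (x:ℂ)) ^ ((q:ℂ) - 1))
        = ∫ x in Set.Ioc (0:ℝ) 1, ((x ^ (p-1) * (1-x) ^ (q-1) : ℝ) : ℂ) from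
      setIntegral_congr_fun measurableSet_Ioc (fun x hx => complex_integrand_eq (le_of_lt hx.1) hx.2)]
    exact integral_ofReal
  rw [hB] at h
  have hG : Real.Gamma (p + q) ≠ 0 := (Real.Gamma_pos_of_pos (by linarith)).ne'
  have := congrArg Complex.re h
  simp only [← Complex.ofReal_add, Complex.Gamma_ofReal, ← Complex.ofReal_mul,
    Complex.ofReal_re] at this
  field_simp
  linarith [this]

lemma gamma_shift {a b q : ℝ} (ha : 0 < a) (l : ℕ) (hb : (l:ℝ) < b)
    (hq : (a + l) ≤ q * (b - l)) (hq0 : 0 ≤ q) :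
    Real.Gamma (a + l) * Real.Gamma (b - l) ≤ q ^ l * (Real.Gamma a * Real.Gamma b) := by
  have key : ∀ k : ℕ, k ≤ l →
      Real.Gamma (a + k) * Real.Gamma (b - k) ≤ q ^ k * (Real.Gamma a * Real.Gamma b) := by
    intro k hk
    induction k with
    | zero => simp
    | succ k ih =>
      have hk' : k ≤ l := Nat.le_of_succ_le hk
      have hkl : (k:ℝ) + 1 ≤ l := by exact_mod_cast hk
      have hbk1 : 0 < b - (k+1) := by push_cast; linarith
      have hak : 0 < a + k := by positivity
      have h1 : Real.Gamma (a + (k+1)) = (a + k) * Real.Gamma (a + k) := by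
        rw [show (a + ((k:ℝ)+1)) = (a + k) + 1 by ring, Real.Gamma_add_one hak.ne']
      have h2 : Real.Gamma (b - k) = (b - (k+1)) * Real.Gamma (b - (k+1)) := by
        rw [show (b - (k:ℝ)) = (b - ((k:ℝ)+1)) + 1 by ring, Real.Gamma_add_one hbk1.ne']
      have hGk1 : 0 < Real.Gamma (b - (k+1)) := Real.Gamma_pos_of_pos hbk1
      have hGa : 0 < Real.Gamma (a + k) := Real.Gamma_pos_of_pos hak
      have hstep : (a + k) * Real.Gamma (b - (k+1)) ≤ q * Real.Gamma (b - k) := by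
        rw [h2]
        have : (a + (k:ℝ)) ≤ q * (b - ((k:ℝ)+1)) := by
          calc (a + (k:ℝ)) ≤ a + l := by linarith
          _ ≤ q * (b - l) := hq
          _ ≤ q * (b - ((k:ℝ)+1)) := by
              apply mul_le_mul_of_nonneg_left _ hq0; linarith
        calc (a + (k:ℝ)) * Real.Gamma (b - (k+1))
            ≤ (q * (b - ((k:ℝ)+1))) * Real.Gamma (b - (k+1)) :=
              mul_le_mul_of_nonneg_right this hGk1.le
          _ = q * ((b - ((k:ℝ)+1)) * Real.Gamma (b - (k+1))) := by ring
      have := ih hk'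
      calc Real.Gamma (a + (k+1:ℕ)) * Real.Gamma (b - (k+1:ℕ))
          = Real.Gamma (a + k) * ((a + k) * Real.Gamma (b - ((k:ℝ)+1))) := by
            push_cast; rw [h1]; ring
        _ ≤ Real.Gamma (a + k) * (q * Real.Gamma (b - k)) := by
            apply mul_le_mul_of_nonneg_left _ hGa.le; exact hstep
        _ = q * (Real.Gamma (a + k) * Real.Gamma (b - k)) := by ring
        _ ≤ q * (q ^ k * (Real.Gamma a * Real.Gamma b)) :=
            mul_le_mul_of_nonneg_left (ih hk') hq0
        _ = q ^ (k+1) * (Real.Gamma a * Real.Gamma b) := by ring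
  exact key l le_rfl

lemma betaMeasure_set_le {a b p q K : ℝ} (hp : 0 < p) (hq : 0 < q) (hK : 0 ≤ K)
    {S : Set ℝ} (hS : MeasurableSet S)
    (hbound : ∀ x ∈ S ∩ Set.Ioo (0:ℝ) 1,
      Real.Gamma (a + b) / (Real.Gamma a * Real.Gamma b) * x ^ (a - 1) * (1 - x) ^ (b - 1)
        ≤ K * (x ^ (p - 1) * (1 - x) ^ (q - 1))) :
    _root_.betaMeasure a b S
      ≤ ENNReal.ofReal (K * (Real.Gamma p * Real.Gamma q / Real.Gamma (p + q))) := by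
  set g : ℝ → ℝ := (Set.Ioo (0:ℝ) 1).indicator
    (fun x => K * (x ^ (p - 1) * (1 - x) ^ (q - 1))) with hg
  have hgnn : 0 ≤ g := by
    intro x
    rw [hg]
    by_cases hx : x ∈ Set.Ioo (0:ℝ) 1
    · rw [Set.indicator_of_mem hx]
      have : (0:ℝ) ≤ x := hx.1.le
      have h2 : (0:ℝ) ≤ 1 - x := by linarith [hx.2]
      positivity
    · rw [Set.indicator_of_notMem hx]; exact le_rfl
  have hgint : Integrable g := by
    rw [hg]
    rw [integrable_indicator_iff measurableSet_Ioo]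
    exact ((real_beta_integrable hp hq).const_mul K)
  have hgm : Measurable g := by
    rw [hg]
    apply Measurable.indicator _ measurableSet_Ioo
    fun_prop
  have step1 : _root_.betaMeasure a b S ≤ ∫⁻ x, ENNReal.ofReal (g x) := by
    rw [_root_.betaMeasure, withDensity_apply _ hS]
    refine le_trans (setLIntegral_mono hgm.ennreal_ofReal fun x hx => ?_)
      (setLIntegral_le_lintegral _ _)
    apply ENNReal.ofReal_le_ofReal
    by_cases hx1 : x ∈ Set.Ioo (0:ℝ) 1
    · rw [if_pos (Set.mem_Ioo.mp hx1), hg, Set.indicator_of_mem hx1]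
      exact hbound x ⟨hx, hx1⟩
    · rw [if_neg (fun h => hx1 (Set.mem_Ioo.mpr h))]
      exact hgnn x
  have step2 : ∫⁻ x, ENNReal.ofReal (g x)
      = ENNReal.ofReal (K * (Real.Gamma p * Real.Gamma q / Real.Gamma (p + q))) := by
    rw [← ofReal_integral_eq_lintegral_ofReal hgint (ae_of_all _ hgnn)]
    congr 1
    rw [hg, integral_indicator measurableSet_Ioo, integral_const_mul,
      real_beta_integral hp hq]
  exact step1.trans (le_of_eq step2)

lemma betaMeasure_Ici_of_one_le {a b t : ℝ} (ht : 1 ≤ t) :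
    _root_.betaMeasure a b (Set.Ici t) = 0 := by
  refine le_antisymm ?_ zero_le
  have h := betaMeasure_set_le (a := a) (b := b) (p := 1) (q := 1) (K := 0)
    one_pos one_pos le_rfl measurableSet_Ici (fun x hx => absurd hx.2.2 (not_lt.mpr (ht.trans hx.1)))
  simpa using h

lemma betaMeasure_Ici_le {a b t q0 : ℝ} (ha : 0 < a) (hb : 0 < b) (l : ℕ)
    (ht0 : 0 < t) (ht1 : t < 1) (hlb : (l:ℝ) < b) (hq0 : 0 ≤ q0)
    (hq : a + l ≤ q0 * (b - l)) :
    _root_.betaMeasure a b (Set.Ici t) ≤ ENNReal.ofReal (((1 - t) / t * q0) ^ l) := by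
  have hGa := Real.Gamma_pos_of_pos ha
  have hGb := Real.Gamma_pos_of_pos hb
  have hGab := Real.Gamma_pos_of_pos (show 0 < a + b by linarith)
  set C : ℝ := Real.Gamma (a + b) / (Real.Gamma a * Real.Gamma b) with hC
  have hCpos : 0 < C := div_pos hGab (mul_pos hGa hGb)
  have hu : (0:ℝ) ≤ (1 - t) / t := div_nonneg (by linarith) ht0.le
  have hp : 0 < a + (l:ℝ) := by positivity
  have hq' : 0 < b - (l:ℝ) := by linarith
  have h := betaMeasure_set_le (a := a) (b := b) (p := a + l) (q := b - l)
    (K := C * ((1 - t) / t) ^ l) (S := Set.Ici t) hp hq' (by positivity) measurableSet_Ici ?_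
  · refine h.trans (ENNReal.ofReal_le_ofReal ?_)
    have hshift := gamma_shift ha l hlb hq hq0
    have hab : a + (l:ℝ) + (b - l) = a + b := by ring
    rw [hab]
    have h2 : C * ((1 - t) / t) ^ l * (Real.Gamma (a + l) * Real.Gamma (b - l) / Real.Gamma (a + b))
        ≤ C * ((1 - t) / t) ^ l * (q0 ^ l * (Real.Gamma a * Real.Gamma b) / Real.Gamma (a + b)) := by
      apply mul_le_mul_of_nonneg_left _ (by positivity)
      exact div_le_div_of_nonneg_right hshift hGab.le
    refine h2.trans (le_of_eq ?_)
    rw [mul_pow, hC]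
    field_simp
  · rintro x ⟨hxt, hx0, hx1⟩
    have hxt' : t ≤ x := hxt
    have h1x : (0:ℝ) < 1 - x := by linarith
    have e1 : x ^ (a + (l:ℝ) - 1) = x ^ (a - 1) * (x:ℝ) ^ (l:ℕ) := by
      rw [show a + (l:ℝ) - 1 = (a - 1) + l by ring, Real.rpow_add hx0, Real.rpow_natCast]
    have e2 : (1 - x) ^ (b - 1) = (1 - x) ^ (b - (l:ℝ) - 1) * (1 - x) ^ (l:ℕ) := by
      rw [show b - 1 = (b - (l:ℝ) - 1) + l by ring, Real.rpow_add h1x, Real.rpow_natCast]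
    have key : (1 - x) ^ (l:ℕ) ≤ ((1 - t) / t) ^ l * x ^ (l:ℕ) := by
      rw [← mul_pow]
      apply pow_le_pow_left₀ h1x.le
      rw [div_mul_eq_mul_div, le_div_iff₀ ht0]
      nlinarith
    calc C * x ^ (a - 1) * (1 - x) ^ (b - 1)
        = (C * x ^ (a - 1) * (1 - x) ^ (b - (l:ℝ) - 1)) * (1 - x) ^ (l:ℕ) := by
          rw [e2]; ring
      _ ≤ (C * x ^ (a - 1) * (1 - x) ^ (b - (l:ℝ) - 1)) * (((1 - t) / t) ^ l * x ^ (l:ℕ)) := by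
          apply mul_le_mul_of_nonneg_left key
          have := Real.rpow_nonneg hx0.le (a - 1)
          have := Real.rpow_nonneg h1x.le (b - (l:ℝ) - 1)
          positivity
      _ = C * ((1 - t) / t) ^ l * (x ^ (a + (l:ℝ) - 1) * (1 - x) ^ (b - (l:ℝ) - 1)) := by
          rw [e1]; ring

lemma betaMeasure_Iic_le {a b t q0 : ℝ} (ha : 0 < a) (hb : 0 < b) (l : ℕ)
    (ht0 : 0 < t) (ht1 : t < 1) (hla : (l:ℝ) < a) (hq0 : 0 ≤ q0)
    (hq : b + l ≤ q0 * (a - l)) :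
    _root_.betaMeasure a b (Set.Iic t) ≤ ENNReal.ofReal ((t / (1 - t) * q0) ^ l) := by
  have hGa := Real.Gamma_pos_of_pos ha
  have hGb := Real.Gamma_pos_of_pos hb
  have hGab := Real.Gamma_pos_of_pos (show 0 < a + b by linarith)
  set C : ℝ := Real.Gamma (a + b) / (Real.Gamma a * Real.Gamma b) with hC
  have hCpos : 0 < C := div_pos hGab (mul_pos hGa hGb)
  have h1t : (0:ℝ) < 1 - t := by linarith
  have hu : (0:ℝ) ≤ t / (1 - t) := div_nonneg ht0.le h1t.le
  have hp : 0 < a - (l:ℝ) := by linarith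
  have hq' : 0 < b + (l:ℝ) := by positivity
  have h := betaMeasure_set_le (a := a) (b := b) (p := a - l) (q := b + l)
    (K := C * (t / (1 - t)) ^ l) (S := Set.Iic t) hp hq' (by positivity) measurableSet_Iic ?_
  · refine h.trans (ENNReal.ofReal_le_ofReal ?_)
    have hshift := gamma_shift hb l hla hq hq0
    have hab : a - (l:ℝ) + (b + l) = a + b := by ring
    rw [hab]
    have h2 : C * (t / (1 - t)) ^ l * (Real.Gamma (a - l) * Real.Gamma (b + l) / Real.Gamma (a + b))
        ≤ C * (t / (1 - t)) ^ l * (q0 ^ l * (Real.Gamma a * Real.Gamma b) / Real.Gamma (a + b)) := by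
      apply mul_le_mul_of_nonneg_left _ (by positivity)
      apply div_le_div_of_nonneg_right _ hGab.le
      calc Real.Gamma (a - l) * Real.Gamma (b + l)
          = Real.Gamma (b + l) * Real.Gamma (a - l) := by ring
        _ ≤ q0 ^ l * (Real.Gamma b * Real.Gamma a) := hshift
        _ = q0 ^ l * (Real.Gamma a * Real.Gamma b) := by ring
    refine h2.trans (le_of_eq ?_)
    rw [mul_pow, hC]
    field_simp
  · rintro x ⟨hxt, hx0, hx1⟩
    have hxt' : x ≤ t := hxt
    have h1x : (0:ℝ) < 1 - x := by linarith
    have e1 : x ^ (a - 1) = x ^ (a - (l:ℝ) - 1) * (x:ℝ) ^ (l:ℕ) := by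
      rw [show a - 1 = (a - (l:ℝ) - 1) + l by ring, Real.rpow_add hx0, Real.rpow_natCast]
    have e2 : (1 - x) ^ (b + (l:ℝ) - 1) = (1 - x) ^ (b - 1) * (1 - x) ^ (l:ℕ) := by
      rw [show b + (l:ℝ) - 1 = (b - 1) + l by ring, Real.rpow_add h1x, Real.rpow_natCast]
    have key : x ^ (l:ℕ) ≤ (t / (1 - t)) ^ l * (1 - x) ^ (l:ℕ) := by
      rw [← mul_pow]
      apply pow_le_pow_left₀ hx0.le
      rw [div_mul_eq_mul_div, le_div_iff₀ h1t]
      nlinarith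
    calc C * x ^ (a - 1) * (1 - x) ^ (b - 1)
        = (C * x ^ (a - (l:ℝ) - 1) * (1 - x) ^ (b - 1)) * x ^ (l:ℕ) := by
          rw [e1]; ring
      _ ≤ (C * x ^ (a - (l:ℝ) - 1) * (1 - x) ^ (b - 1)) * ((t / (1 - t)) ^ l * (1 - x) ^ (l:ℕ)) := by
          apply mul_le_mul_of_nonneg_left key
          have := Real.rpow_nonneg hx0.le (a - (l:ℝ) - 1)
          have := Real.rpow_nonneg h1x.le (b - 1)
          positivity
      _ = C * (t / (1 - t)) ^ l * (x ^ (a - (l:ℝ) - 1) * (1 - x) ^ (b + (l:ℝ) - 1)) := by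
          rw [e2]; ring

set_option maxHeartbeats 1000000 in
/-- **Beta tail bounds.** There is a constant `c > 0` such that for all sufficiently
large `m` and `n`, if `Z ∼ Beta(n/2, m/2)` then
`P(Z ≥ (n + c n^{3/4})/(m + n − c (m+n)^{3/4})) ≤ exp(−n^{1/2}) + exp(−(m+n)^{1/2})`
and
`P(Z ≤ (n − c n^{3/4})/(m + n + c (m+n)^{3/4})) ≤ exp(−n^{1/2}) + exp(−(m+n)^{1/2})`. -/
theorem beta_tail_bounds :
    ∃ c > (0 : ℝ), ∃ N : ℕ, ∀ m ≥ N, ∀ n ≥ N,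
      ∀ (Ω : Type) (_ : MeasurableSpace Ω) (P : Measure Ω), IsProbabilityMeasure P →
        ∀ Z : Ω → ℝ, Measurable Z →
          Measure.map Z P = _root_.betaMeasure ((n : ℝ) / 2) ((m : ℝ) / 2) →
          P {ω | Z ω ≥ ((n : ℝ) + c * (n : ℝ) ^ ((3 : ℝ) / 4))
                  / ((m : ℝ) + n - c * ((m : ℝ) + n) ^ ((3 : ℝ) / 4))}
              ≤ ENNReal.ofReal (Real.exp (-(n : ℝ) ^ ((1 : ℝ) / 2))
                  + Real.exp (-((m : ℝ) + n) ^ ((1 : ℝ) / 2)))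
          ∧ P {ω | Z ω ≤ ((n : ℝ) - c * (n : ℝ) ^ ((3 : ℝ) / 4))
                  / ((m : ℝ) + n + c * ((m : ℝ) + n) ^ ((3 : ℝ) / 4))}
              ≤ ENNReal.ofReal (Real.exp (-(n : ℝ) ^ ((1 : ℝ) / 2))
                  + Real.exp (-((m : ℝ) + n) ^ ((1 : ℝ) / 2))) := by
  refine ⟨8, by norm_num, 1000000, fun m hm n hn Ω _ P hP Z hZ hmap => ?_⟩
  have hn0 : (0:ℝ) ≤ (n:ℝ) := Nat.cast_nonneg n
  have hmn0 : (0:ℝ) ≤ (m:ℝ) + n := by positivity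
  have hn6 : (1000000:ℝ) ≤ (n:ℝ) := by exact_mod_cast Nat.cast_le.mpr hn
  have hm6 : (1000000:ℝ) ≤ (m:ℝ) := by exact_mod_cast Nat.cast_le.mpr hm
  set s : ℝ := (n:ℝ) ^ ((1:ℝ)/4) with hs
  set σ : ℝ := ((m:ℝ) + n) ^ ((1:ℝ)/4) with hσ
  have hs0 : 0 ≤ s := Real.rpow_nonneg hn0 _
  have hσ0 : 0 ≤ σ := Real.rpow_nonneg hmn0 _
  have hs4 : s ^ 4 = (n:ℝ) := by
    rw [hs, ← Real.rpow_natCast ((n:ℝ) ^ ((1:ℝ)/4)) 4, ← Real.rpow_mul hn0]; norm_num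
  have hσ4 : σ ^ 4 = (m:ℝ) + n := by
    rw [hσ, ← Real.rpow_natCast (((m:ℝ)+n) ^ ((1:ℝ)/4)) 4, ← Real.rpow_mul hmn0]; norm_num
  have h34 : (n:ℝ) ^ ((3:ℝ)/4) = s ^ 3 := by
    rw [hs, ← Real.rpow_natCast ((n:ℝ) ^ ((1:ℝ)/4)) 3, ← Real.rpow_mul hn0]; norm_num
  have hσ34 : ((m:ℝ)+n) ^ ((3:ℝ)/4) = σ ^ 3 := by
    rw [hσ, ← Real.rpow_natCast (((m:ℝ)+n) ^ ((1:ℝ)/4)) 3, ← Real.rpow_mul hmn0]; norm_num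
  have h12 : (n:ℝ) ^ ((1:ℝ)/2) = s ^ 2 := by
    rw [hs, ← Real.rpow_natCast ((n:ℝ) ^ ((1:ℝ)/4)) 2, ← Real.rpow_mul hn0]; norm_num
  set l : ℕ := ⌈(n:ℝ) ^ ((3:ℝ)/4)⌉₊ with hl
  have hl1 : s ^ 3 ≤ (l:ℝ) := by rw [hl, h34]; exact Nat.le_ceil _
  have hl2 : (l:ℝ) ≤ s ^ 3 + 1 := by
    rw [hl, h34]
    exact (Nat.ceil_lt_add_one (by positivity)).le
  clear_value s σ l
  have hs31 : (31:ℝ) ≤ s := by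
    by_contra h
    push_neg at h
    have := pow_lt_pow_left₀ h hs0 (n := 4) (by norm_num)
    rw [hs4] at this
    norm_num at this
    linarith
  have hσs : s ≤ σ := by
    by_contra h
    push_neg at h
    have := pow_lt_pow_left₀ h hσ0 (n := 4) (by norm_num)
    rw [hs4, hσ4] at this
    have h0m : (0:ℝ) ≤ (m:ℝ) := Nat.cast_nonneg m
    linarith
  have hsp : (0:ℝ) < s := by linarith
  have hσ31 : (31:ℝ) ≤ σ := hs31.trans hσs
  have hm' : (m:ℝ) = σ ^ 4 - s ^ 4 := by rw [hs4, hσ4]; ring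
  have hs3one : (1:ℝ) ≤ s^3 := one_le_pow₀ (by linarith)
  have hs2one : (1:ℝ) ≤ s^2 := one_le_pow₀ (by linarith)
  have hσ3one : (1:ℝ) ≤ σ^3 := one_le_pow₀ (by linarith)
  have hσ3nn : (0:ℝ) ≤ σ^3 := by positivity
  have hs31' : 31*s^3 ≤ s^4 := by nlinarith [mul_nonneg (pow_nonneg hs0 3) (sub_nonneg.mpr hs31)]
  have hs31'' : 31*s^2 ≤ s^3 := by nlinarith [mul_nonneg (pow_nonneg hs0 2) (sub_nonneg.mpr hs31)]
  have hσ31' : 31*σ^3 ≤ σ^4 := by nlinarith [mul_nonneg (pow_nonneg hσ0 3) (sub_nonneg.mpr hσ31)]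
  have hq0nn : (0:ℝ) ≤ 1 - 1/s := by
    have : 1/s ≤ 1 := by rw [div_le_one hsp]; linarith
    linarith
  have hpow_exp : ((1 - 1/s : ℝ)) ^ l ≤ Real.exp (-(s^2)) := by
    have h1 : 1 - 1/s ≤ Real.exp (-(1/s)) := by
      have := Real.add_one_le_exp (-(1/s)); linarith
    calc ((1 - 1/s : ℝ)) ^ l ≤ (Real.exp (-(1/s))) ^ l := pow_le_pow_left₀ hq0nn h1 l
      _ = Real.exp ((l:ℕ) * (-(1/s))) := by rw [Real.exp_nat_mul]
      _ ≤ Real.exp (-(s^2)) := by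
          apply Real.exp_le_exp.mpr
          rw [mul_neg, neg_le_neg_iff, mul_one_div, le_div_iff₀ hsp]
          have hcube : s^2 * s = s^3 := by ring
          linarith
  have hfinal : ENNReal.ofReal (((1 - 1/s : ℝ)) ^ l)
      ≤ ENNReal.ofReal (Real.exp (-(n:ℝ) ^ ((1:ℝ)/2)) + Real.exp (-((m:ℝ)+n) ^ ((1:ℝ)/2))) := by
    apply ENNReal.ofReal_le_ofReal
    refine hpow_exp.trans ?_
    rw [h12]
    exact le_add_of_nonneg_right (Real.exp_pos _).le
  have ha : (0:ℝ) < (n:ℝ)/2 := by linarith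
  have hb : (0:ℝ) < (m:ℝ)/2 := by linarith
  have h2l : 2*(l:ℝ) ≤ 8*s^3 := by linarith
  constructor
  · -- upper tail
    set T : ℝ := ((n:ℝ) + 8 * (n:ℝ) ^ ((3:ℝ)/4)) / ((m:ℝ) + n - 8 * ((m:ℝ)+n) ^ ((3:ℝ)/4)) with hT
    have hTeq : T = (s^4 + 8*s^3) / (σ^4 - 8*σ^3) := by rw [hT, h34, hσ34, hs4, hσ4]
    clear_value T
    have hNu : (0:ℝ) < s^4 + 8*s^3 := by positivity
    have hD : (0:ℝ) < σ^4 - 8*σ^3 := by linarith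
    have hPT : P {ω | Z ω ≥ T} = _root_.betaMeasure ((n:ℝ)/2) ((m:ℝ)/2) (Set.Ici T) := by
      rw [show {ω | Z ω ≥ T} = Z ⁻¹' (Set.Ici T) from rfl,
        ← Measure.map_apply hZ measurableSet_Ici, hmap]
    rcases le_or_gt 1 T with h1T | h1T
    · rw [hPT, betaMeasure_Ici_of_one_le h1T]
      exact zero_le
    · have hT0 : 0 < T := by rw [hTeq]; exact div_pos hNu hD
      have h1T' : (0:ℝ) < 1 - T := by linarith
      set q0 : ℝ := (1 - 1/s) * (T / (1 - T)) with hq0def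
      have hq0 : 0 ≤ q0 := mul_nonneg hq0nn (div_nonneg hT0.le h1T'.le)
      have hMu : (0:ℝ) < σ^4 - 8*σ^3 - (s^4 + 8*s^3) := by
        have := (div_lt_one hD).mp (hTeq ▸ h1T)
        linarith
      have hodds : T / (1 - T) = (s^4 + 8*s^3) / (σ^4 - 8*σ^3 - (s^4 + 8*s^3)) := by
        rw [hTeq]
        rw [show 1 - (s^4 + 8*s^3) / (σ^4 - 8*σ^3)
            = (σ^4 - 8*σ^3 - (s^4 + 8*s^3)) / (σ^4 - 8*σ^3) by
              rw [eq_div_iff hD.ne', sub_mul, div_mul_cancel₀ _ hD.ne', one_mul]]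
        rw [div_div_div_cancel_right₀]
        exact hD.ne'
      have hE : 0 < (m:ℝ)/2 - l := by linarith
      have hlb : (l:ℝ) < (m:ℝ)/2 := by linarith
      have hfac : s^4 + 2*(l:ℝ) ≤ (1 - 1/s) * (s^4 + 8*s^3) := by
        have he : (1 - 1/s) * (s^4 + 8*s^3) = s^4 + 7*s^3 - 8*s^2 := by
          field_simp; ring
        rw [he]; linarith
      have hkey : ((n:ℝ)/2 + l) * (σ^4 - 8*σ^3 - (s^4 + 8*s^3))
          ≤ (1 - 1/s) * (s^4 + 8*s^3) * ((m:ℝ)/2 - l) := by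
        have hMu2E : σ^4 - 8*σ^3 - (s^4 + 8*s^3) ≤ (m:ℝ) - 2*l := by linarith
        have hnl : (0:ℝ) ≤ (n:ℝ)/2 + l := by positivity
        calc ((n:ℝ)/2 + l) * (σ^4 - 8*σ^3 - (s^4 + 8*s^3))
            ≤ ((n:ℝ)/2 + l) * ((m:ℝ) - 2*l) := mul_le_mul_of_nonneg_left hMu2E hnl
          _ = (s^4 + 2*l) * ((m:ℝ)/2 - l) := by rw [← hs4]; ring
          _ ≤ (1 - 1/s) * (s^4 + 8*s^3) * ((m:ℝ)/2 - l) :=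
              mul_le_mul_of_nonneg_right hfac hE.le
      have hq : (n:ℝ)/2 + l ≤ q0 * ((m:ℝ)/2 - l) := by
        rw [hq0def, hodds]
        rw [show (1 - 1/s) * ((s^4 + 8*s^3) / (σ^4 - 8*σ^3 - (s^4 + 8*s^3))) * ((m:ℝ)/2 - l)
            = ((1 - 1/s) * (s^4 + 8*s^3) * ((m:ℝ)/2 - l)) / (σ^4 - 8*σ^3 - (s^4 + 8*s^3)) by
          ring]
        rw [le_div_iff₀ hMu]
        exact hkey
      have hbound := betaMeasure_Ici_le ha hb l hT0 h1T hlb hq0 hq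
      have hueq : (1 - T) / T * q0 = 1 - 1/s := by
        rw [hq0def]
        field_simp
      rw [hPT]
      refine hbound.trans ?_
      rw [hueq]
      exact hfinal
  · -- lower tail
    set T : ℝ := ((n:ℝ) - 8 * (n:ℝ) ^ ((3:ℝ)/4)) / ((m:ℝ) + n + 8 * ((m:ℝ)+n) ^ ((3:ℝ)/4)) with hT
    have hTeq : T = (s^4 - 8*s^3) / (σ^4 + 8*σ^3) := by rw [hT, h34, hσ34, hs4, hσ4]
    clear_value T
    have hNu : (0:ℝ) < s^4 - 8*s^3 := by linarith
    have hD : (0:ℝ) < σ^4 + 8*σ^3 := by linarith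
    have hT0 : 0 < T := by rw [hTeq]; exact div_pos hNu hD
    have hT1 : T < 1 := by
      rw [hTeq, div_lt_one hD]
      linarith
    have h1T' : (0:ℝ) < 1 - T := by linarith
    have hMu : (0:ℝ) < σ^4 + 8*σ^3 - (s^4 - 8*s^3) := by linarith
    have hPT : P {ω | Z ω ≤ T} = _root_.betaMeasure ((n:ℝ)/2) ((m:ℝ)/2) (Set.Iic T) := by
      rw [show {ω | Z ω ≤ T} = Z ⁻¹' (Set.Iic T) from rfl,
        ← Measure.map_apply hZ measurableSet_Iic, hmap]
    set q0 : ℝ := (1 - 1/s) * ((1 - T) / T) with hq0def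
    have hq0 : 0 ≤ q0 := mul_nonneg hq0nn (div_nonneg h1T'.le hT0.le)
    have hodds : (1 - T) / T = (σ^4 + 8*σ^3 - (s^4 - 8*s^3)) / (s^4 - 8*s^3) := by
      rw [hTeq]
      rw [show 1 - (s^4 - 8*s^3) / (σ^4 + 8*σ^3)
          = (σ^4 + 8*σ^3 - (s^4 - 8*s^3)) / (σ^4 + 8*σ^3) by field_simp]
      rw [div_div_div_cancel_right₀]
      exact hD.ne'
    have hla : (l:ℝ) < (n:ℝ)/2 := by linarith
    have hA : 0 < (n:ℝ)/2 - l := by linarith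
    have hkey : ((m:ℝ)/2 + l) * (s^4 - 8*s^3)
        ≤ (1 - 1/s) * (σ^4 + 8*σ^3 - (s^4 - 8*s^3)) * ((n:ℝ)/2 - l) := by
      have hfac : s^4 - 8*s^3 ≤ (1 - 1/s) * (s^4 - 2*l) := by
        have he : (1 - 1/s) * (s^4 - 2*(l:ℝ)) = s^4 - 2*l - s^3 + 2*l/s := by
          field_simp; ring
        rw [he]
        have h0 : 0 ≤ 2*(l:ℝ)/s := by positivity
        linarith
      have hMu2 : (m:ℝ) + 2*l ≤ σ^4 + 8*σ^3 - (s^4 - 8*s^3) := by linarith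
      calc ((m:ℝ)/2 + l) * (s^4 - 8*s^3)
          ≤ ((m:ℝ)/2 + l) * ((1 - 1/s) * (s^4 - 2*l)) := by
            apply mul_le_mul_of_nonneg_left hfac (by positivity)
        _ = (1 - 1/s) * ((m:ℝ) + 2*l) * (s^4/2 - l) := by ring
        _ ≤ (1 - 1/s) * (σ^4 + 8*σ^3 - (s^4 - 8*s^3)) * (s^4/2 - l) := by
            apply mul_le_mul_of_nonneg_right _ (by linarith : (0:ℝ) ≤ s^4/2 - l)
            apply mul_le_mul_of_nonneg_left hMu2 hq0nn
        _ = (1 - 1/s) * (σ^4 + 8*σ^3 - (s^4 - 8*s^3)) * ((n:ℝ)/2 - l) := by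
            rw [← hs4]
    have hq : (m:ℝ)/2 + l ≤ q0 * ((n:ℝ)/2 - l) := by
      rw [hq0def, hodds]
      rw [show (1 - 1/s) * ((σ^4 + 8*σ^3 - (s^4 - 8*s^3)) / (s^4 - 8*s^3)) * ((n:ℝ)/2 - l)
          = ((1 - 1/s) * (σ^4 + 8*σ^3 - (s^4 - 8*s^3)) * ((n:ℝ)/2 - l)) / (s^4 - 8*s^3) by
        ring]
      rw [le_div_iff₀ hNu]
      exact hkey
    have hbound := betaMeasure_Iic_le ha hb l hT0 hT1 hla hq0 hq
    have hueq : T / (1 - T) * q0 = 1 - 1/s := by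
      rw [hq0def]
      field_simp
    rw [hPT]
    refine hbound.trans ?_
    rw [hueq]
    exact hfinal
end

section
/- Let Z ∼ Beta(n/2, m/2) with m > n and n/m → c₃ for some 0 ≤ c₃ < 1. Then there exists a constant c₁ such that for all sufficiently large m and n, P(|Z − n/(m+n)| ≥ c₁·n^{3/4}/(m+n)) ≤ 2·exp(−n^{1/2}). -/
open MeasureTheory ProbabilityTheory Filter
open Set

noncomputable def Bg (a b x : ℝ) : ℝ := (a-1) * Real.log x + (b-1) * Real.log (1-x)
noncomputable def BG (a b x : ℝ) : ℝ := (a-1)/x - (b-1)/(1-x)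

lemma hasDerivAt_Bg (a b : ℝ) {x : ℝ} (hx : 0 < x) (hx1 : x < 1) :
    HasDerivAt (Bg a b) (BG a b x) x := by
  have h1 : HasDerivAt (fun y : ℝ => Real.log y) x⁻¹ x := Real.hasDerivAt_log hx.ne'
  have h2 : HasDerivAt (fun y : ℝ => (1 : ℝ) - y) (-1) x := by
    simpa using (hasDerivAt_id x).const_sub 1
  have h3 : HasDerivAt (fun y : ℝ => Real.log (1 - y)) ((1-x)⁻¹ * (-1)) x :=
    (Real.hasDerivAt_log (by linarith : (1:ℝ) - x ≠ 0)).comp x h2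
  have h := (h1.const_mul (a-1)).add (h3.const_mul (b-1))
  exact h.congr_deriv (by unfold BG; ring)

lemma BG_anti (a b : ℝ) (ha : 1 ≤ a) (hb : 1 ≤ b) {x y : ℝ} (hx : 0 < x) (hy : y < 1)
    (hxy : x ≤ y) : BG a b y ≤ BG a b x := by
  unfold BG
  have hy0 : 0 < y := lt_of_lt_of_le hx hxy
  have h1y : 0 < 1 - y := by linarith
  have h1x : 0 < 1 - x := by linarith
  gcongr <;> linarith

lemma Bg_cont (a b : ℝ) {s : Set ℝ} (hs : s ⊆ Ioo 0 1) : ContinuousOn (Bg a b) s := by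
  intro x hx
  obtain ⟨hx0, hx1⟩ := hs hx
  exact ((hasDerivAt_Bg a b hx0 hx1).continuousAt).continuousWithinAt

/-- decreasing direction: if `G p ≤ s` then `y ↦ g y - s y` is antitone on `[p,q]`. -/
lemma Bg_le_left (a b : ℝ) (ha : 1 ≤ a) (hb : 1 ≤ b) {s p q : ℝ}
    (hp : 0 < p) (hq : q < 1) (hpq : p ≤ q) (hs : BG a b p ≤ s) :
    Bg a b q - s * q ≤ Bg a b p - s * p := by
  have hsub : Icc p q ⊆ Ioo 0 1 := fun y hy => ⟨lt_of_lt_of_le hp hy.1, lt_of_le_of_lt hy.2 hq⟩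
  have hanti : AntitoneOn (fun y => Bg a b y - s * y) (Icc p q) := by
    apply antitoneOn_of_deriv_nonpos (convex_Icc p q)
    · exact (Bg_cont a b hsub).sub (continuous_const.mul continuous_id).continuousOn
    · intro y hy
      rw [interior_Icc] at hy
      obtain ⟨hy0, hy1⟩ := hsub (Ioo_subset_Icc_self hy)
      exact (((hasDerivAt_Bg a b hy0 hy1).sub
        (by simpa using (hasDerivAt_id y).const_mul s)).differentiableAt).differentiableWithinAt
    · intro y hy
      rw [interior_Icc] at hy
      obtain ⟨hy0, hy1⟩ := hsub (Ioo_subset_Icc_self hy)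
      have hd := (hasDerivAt_Bg a b hy0 hy1).sub (by simpa using (hasDerivAt_id y).const_mul s : HasDerivAt (fun y => s * y) s y)
      rw [show (fun y => Bg a b y - s * y) = (Bg a b - fun y => s * y) from rfl, hd.deriv]
      have := BG_anti a b ha hb hp hy1 (le_of_lt hy.1)
      linarith
  exact hanti (left_mem_Icc.2 hpq) (right_mem_Icc.2 hpq) hpq

/-- increasing direction: if `s ≤ G q` then `y ↦ g y - s y` is monotone on `[p,q]`. -/
lemma Bg_le_right (a b : ℝ) (ha : 1 ≤ a) (hb : 1 ≤ b) {s p q : ℝ}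
    (hp : 0 < p) (hq : q < 1) (hpq : p ≤ q) (hs : s ≤ BG a b q) :
    Bg a b p - s * p ≤ Bg a b q - s * q := by
  have hsub : Icc p q ⊆ Ioo 0 1 := fun y hy => ⟨lt_of_lt_of_le hp hy.1, lt_of_le_of_lt hy.2 hq⟩
  have hmono : MonotoneOn (fun y => Bg a b y - s * y) (Icc p q) := by
    apply monotoneOn_of_deriv_nonneg (convex_Icc p q)
    · exact (Bg_cont a b hsub).sub (continuous_const.mul continuous_id).continuousOn
    · intro y hy
      rw [interior_Icc] at hy
      obtain ⟨hy0, hy1⟩ := hsub (Ioo_subset_Icc_self hy)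
      exact (((hasDerivAt_Bg a b hy0 hy1).sub
        (by simpa using (hasDerivAt_id y).const_mul s)).differentiableAt).differentiableWithinAt
    · intro y hy
      rw [interior_Icc] at hy
      obtain ⟨hy0, hy1⟩ := hsub (Ioo_subset_Icc_self hy)
      have hd := (hasDerivAt_Bg a b hy0 hy1).sub (by simpa using (hasDerivAt_id y).const_mul s : HasDerivAt (fun y => s * y) s y)
      rw [show (fun y => Bg a b y - s * y) = (Bg a b - fun y => s * y) from rfl, hd.deriv]
      have := BG_anti a b ha hb hy0 hq hy.2.le
      linarith
  exact hmono (left_mem_Icc.2 hpq) (right_mem_Icc.2 hpq) hpq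

lemma rpow_eq_exp_Bg (a b : ℝ) {x : ℝ} (hx : 0 < x) (hx1 : x < 1) :
    x ^ (a-1) * (1-x) ^ (b-1) = Real.exp (Bg a b x) := by
  rw [Real.rpow_def_of_pos hx, Real.rpow_def_of_pos (by linarith), ← Real.exp_add]
  unfold Bg
  ring_nf
lemma integral_exp_mul_Ioc (s p q : ℝ) (hs : s ≠ 0) (hpq : p ≤ q) :
    ∫ y in Ioc p q, Real.exp (s*y) = Real.exp (s*q)/s - Real.exp (s*p)/s := by
  have key : ∀ y : ℝ, HasDerivAt (fun z => Real.exp (s*z)/s) (Real.exp (s*y)) y := by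
    intro y
    have hlin : HasDerivAt (fun z : ℝ => s*z) s y := by
      simpa using (hasDerivAt_id y).const_mul s
    have h := ((Real.hasDerivAt_exp (s*y)).comp y hlin).div_const s
    exact h.congr_deriv (mul_div_cancel_right₀ _ hs)
  rw [← intervalIntegral.integral_of_le hpq]
  exact intervalIntegral.integral_eq_sub_of_hasDerivAt (fun y _ => key y)
    ((Real.continuous_exp.comp (continuous_const.mul continuous_id)).intervalIntegrable p q)

section slopes
variable {a b t : ℝ}

lemma BG_mu_eq (ha : 2 ≤ a) (hab : a < b) :
    BG a b (a/(a+b)) = (a+b)*(a-b)/(a*b) := by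
  have hN : 0 < a + b := by linarith
  have hb : 2 ≤ b := by linarith
  unfold BG
  have h1 : 1 - a/(a+b) = b/(a+b) := by field_simp; ring
  rw [h1]
  field_simp
  ring

lemma BG_mu_le (ha : 2 ≤ a) (hab : a < b) :
    BG a b (a/(a+b)) ≤ 0 := by
  have hN : 0 < a + b := by linarith
  rw [BG_mu_eq ha hab]
  apply div_nonpos_of_nonpos_of_nonneg
  · nlinarith
  · nlinarith

lemma BG_mu_ge (ha : 2 ≤ a) (hab : a < b) :
    -((a+b)/a) ≤ BG a b (a/(a+b)) := by
  have hN : 0 < a + b := by linarith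
  have hb : 2 ≤ b := by linarith
  rw [BG_mu_eq ha hab, neg_le, ← neg_div]
  rw [div_le_div_iff₀ (by positivity) (by positivity)]
  nlinarith [mul_pos hN (mul_pos (show (0:ℝ) < a by linarith) (show (0:ℝ) < a by linarith))]

/-- Upper slope bound: at `μ + u` with `0 < u ≤ μ`, the slope is `≤ -u N²/(4a)`. -/
lemma BG_plus_le (ha : 2 ≤ a) (hab : a < b) {u : ℝ} (hu : 0 < u) (huμ : u ≤ a/(a+b)) :
    BG a b (a/(a+b) + u) ≤ -(u*(a+b)^2/(4*a)) := by
  have hb : 2 ≤ b := by linarith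
  have hN : 0 < a + b := by linarith
  have ha0 : (0:ℝ) < a := by linarith
  have hμ0 : 0 < a/(a+b) := by positivity
  have h2μ : 2*(a/(a+b)) < 1 := by
    rw [show 2*(a/(a+b)) = 2*a/(a+b) by ring, div_lt_one hN]; linarith
  have hc0 : 0 < a/(a+b) + u := by linarith
  have hc1 : a/(a+b) + u < 1 := by linarith
  have h1c : 0 < 1 - (a/(a+b) + u) := by linarith
  have h1μ : 0 < 1 - a/(a+b) := by linarith
  have e1 : (a-1)/(a/(a+b)+u) - (a-1)/(a/(a+b)) = -((a-1)*u/((a/(a+b))*(a/(a+b)+u))) := by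
    field_simp
    ring
  have e2 : (b-1)/(1-a/(a+b)) ≤ (b-1)/(1-(a/(a+b)+u)) :=
    div_le_div_of_nonneg_left (by linarith) h1c (by linarith)
  have e3 : BG a b (a/(a+b)) ≤ 0 := BG_mu_le ha hab
  have e4 : u*(a+b)^2/(4*a) ≤ (a-1)*u/((a/(a+b))*(a/(a+b)+u)) := by
    have hμc : (a/(a+b))*(a/(a+b)+u) ≤ 2*(a/(a+b))^2 := by nlinarith
    have h2 : (a-1)*u/(2*(a/(a+b))^2) ≤ (a-1)*u/((a/(a+b))*(a/(a+b)+u)) :=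
      div_le_div_of_nonneg_left (by nlinarith) (by positivity) hμc
    have h3 : u*(a+b)^2/(4*a) ≤ (a-1)*u/(2*(a/(a+b))^2) := by
      rw [div_le_div_iff₀ (by positivity) (by positivity)]
      have hkey : (0:ℝ) ≤ 2*u*a*(a-2) :=
        mul_nonneg (by positivity) (by linarith)
      have hsq : (a/(a+b))^2 = a^2/(a+b)^2 := by rw [div_pow]
      rw [hsq]
      rw [show u*(a+b)^2*(2*(a^2/(a+b)^2)) = 2*u*a^2*((a+b)^2/(a+b)^2) by ring,
        div_self (by positivity : ((a+b)^2 : ℝ) ≠ 0)]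
      nlinarith [hkey]
    linarith
  have expand : BG a b (a/(a+b)+u)
      = BG a b (a/(a+b)) + ((a-1)/(a/(a+b)+u) - (a-1)/(a/(a+b)))
        - ((b-1)/(1-(a/(a+b)+u)) - (b-1)/(1-a/(a+b))) := by
    unfold BG
    ring
  rw [expand, e1]
  linarith

/-- Lower slope bound: at `μ - u` with `0 < u < μ`, slope `≥ u N²/(4a) - N/a`. -/
lemma BG_minus_ge (ha : 2 ≤ a) (hab : a < b) {u : ℝ} (hu : 0 < u) (huμ : u < a/(a+b)) :
    u*(a+b)^2/(4*a) - (a+b)/a ≤ BG a b (a/(a+b) - u) := by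
  have hb : 2 ≤ b := by linarith
  have hN : 0 < a + b := by linarith
  have ha0 : (0:ℝ) < a := by linarith
  have hμ0 : 0 < a/(a+b) := by positivity
  have hμ1 : a/(a+b) < 1 := by rw [div_lt_one hN]; linarith
  have hc0 : 0 < a/(a+b) - u := by linarith
  have h1c : 0 < 1 - (a/(a+b) - u) := by linarith
  have h1μ : 0 < 1 - a/(a+b) := by linarith
  have gen : ∀ x y : ℝ, 0 < x → 0 < y → (a-1)/x - (a-1)/y = (a-1)*(y-x)/(y*x) := by
    intro x y hx hy
    field_simp
  have e1 := gen (a/(a+b)-u) (a/(a+b)) hc0 hμ0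
  rw [show a/(a+b) - (a/(a+b)-u) = u by ring] at e1
  have e2 : (b-1)/(1-(a/(a+b)-u)) ≤ (b-1)/(1-a/(a+b)) :=
    div_le_div_of_nonneg_left (by linarith) h1μ (by linarith)
  have e3 : -((a+b)/a) ≤ BG a b (a/(a+b)) := BG_mu_ge ha hab
  have e4 : u*(a+b)^2/(4*a) ≤ (a-1)*u/((a/(a+b))*(a/(a+b)-u)) := by
    have h2 : (a-1)*u/((a/(a+b))*(a/(a+b))) ≤ (a-1)*u/((a/(a+b))*(a/(a+b)-u)) :=
      div_le_div_of_nonneg_left (by nlinarith) (by positivity) (by nlinarith)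
    have h3 : u*(a+b)^2/(4*a) ≤ (a-1)*u/((a/(a+b))*(a/(a+b))) := by
      rw [div_le_div_iff₀ (by positivity) (by positivity)]
      have hkey : (0:ℝ) ≤ u*a*(3*a-4) :=
        mul_nonneg (by positivity) (by linarith)
      rw [show (a/(a+b))*(a/(a+b)) = a^2/(a+b)^2 by rw [div_mul_div_comm]; ring_nf]
      rw [show u*(a+b)^2*(a^2/(a+b)^2) = u*a^2*((a+b)^2/(a+b)^2) by ring,
        div_self (by positivity : ((a+b)^2 : ℝ) ≠ 0)]
      nlinarith [hkey]
    linarith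
  have expand : BG a b (a/(a+b)-u)
      = BG a b (a/(a+b)) + ((a-1)/(a/(a+b)-u) - (a-1)/(a/(a+b)))
        - ((b-1)/(1-(a/(a+b)-u)) - (b-1)/(1-a/(a+b))) := by
    unfold BG
    ring
  rw [expand, e1]
  linarith

end slopes
set_option maxHeartbeats 1000000 in
lemma betaMeasure_tail_le (a b t D : ℝ) (ha : 2 ≤ a) (hab : a < b) (ht0 : 0 < t)
    (htμ0 : t ≤ a/(a+b)) (htN : 16 ≤ t*(a+b))
    (hE2 : 2 ≤ t^2*(a+b)^2/(32*a)) (hED : D ≤ t^2*(a+b)^2/(32*a))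
    (hβ : _root_.betaMeasure a b Set.univ ≤ 1) :
    _root_.betaMeasure a b {x | t ≤ |x - a/(a+b)|} ≤ ENNReal.ofReal (2 * Real.exp (-D)) := by
  have hb : 2 ≤ b := by linarith
  have hN : 0 < a + b := by linarith
  have ha0 : (0:ℝ) < a := by linarith
  have ha1 : (1:ℝ) ≤ a := by linarith
  have hb1 : (1:ℝ) ≤ b := by linarith
  set μ : ℝ := a/(a+b) with hμdef
  have htμ : t ≤ μ := htμ0
  have hμ0 : 0 < μ := by positivity
  have h2μ : 2*μ < 1 := by
    rw [hμdef, show 2*(a/(a+b)) = 2*a/(a+b) by ring, div_lt_one hN]; linarith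
  have hμ1 : μ < 1 := by linarith
  clear_value μ
  clear htμ0
  set u : ℝ := t/2 with hudef
  have hu0 : 0 < u := by rw [hudef]; linarith
  have hut : u < t := by rw [hudef]; linarith
  have huN : 8 ≤ u*(a+b) := by
    have h : t*(a+b) = 2*(u*(a+b)) := by rw [hudef]; ring
    linarith
  clear_value u
  have huμ : u ≤ μ := by linarith
  have huμ' : u < μ := lt_of_lt_of_le hut htμ
  set c : ℝ := μ + u with hcdef
  set c' : ℝ := μ - u with hc'def
  have hc0 : 0 < c := by rw [hcdef]; linarith
  have hc1 : c < 1 := by rw [hcdef]; linarith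
  have hc'0 : 0 < c' := by rw [hc'def]; linarith
  have hc'1 : c' < 1 := by rw [hc'def]; linarith
  clear_value c c'
  have hμt1 : μ + t < 1 := by linarith
  have hμt0 : 0 ≤ μ - t := by linarith
  -- the normalizing constant and density
  set C : ℝ := Real.Gamma (a+b) / (Real.Gamma a * Real.Gamma b) with hCdef
  have hC0 : 0 < C := div_pos (Real.Gamma_pos_of_pos hN)
    (mul_pos (Real.Gamma_pos_of_pos ha0) (Real.Gamma_pos_of_pos (by linarith)))
  set f : ℝ → ℝ := fun x => C * x ^ (a-1) * (1-x) ^ (b-1) with hfdef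
  have hfcont : Continuous f := by
    rw [hfdef]
    apply Continuous.mul
    · exact continuous_const.mul (Real.continuous_rpow_const (by linarith))
    · exact (Real.continuous_rpow_const (by linarith)).comp (continuous_const.sub continuous_id)
  have hfint : IntegrableOn f (Icc 0 1) volume := hfcont.integrableOn_Icc
  have hfeq : ∀ x ∈ Ioo (0:ℝ) 1, f x = C * Real.exp (Bg a b x) := by
    intro x hx
    rw [hfdef]
    simp only
    rw [mul_assoc, rpow_eq_exp_Bg a b hx.1 hx.2]
  have hfnn : ∀ x ∈ Icc (0:ℝ) 1, 0 ≤ f x := by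
    intro x hx
    rw [hfdef]
    exact mul_nonneg (mul_nonneg hC0.le (Real.rpow_nonneg hx.1 _))
      (Real.rpow_nonneg (by linarith [hx.2]) _)
  -- beta measure of sets inside (0,1)
  have Hbeta : ∀ S : Set ℝ, MeasurableSet S → S ⊆ Ioo 0 1 →
      _root_.betaMeasure a b S = ENNReal.ofReal (∫ x in S, f x) := by
    intro S hS hSsub
    rw [_root_.betaMeasure, withDensity_apply _ hS]
    have h1 : ∀ x ∈ S, ENNReal.ofReal (if 0 < x ∧ x < 1 then
        Real.Gamma (a + b) / (Real.Gamma a * Real.Gamma b) * x ^ (a - 1) * (1 - x) ^ (b - 1) else 0)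
        = ENNReal.ofReal (f x) := by
      intro x hx
      have hx' := hSsub hx
      rw [if_pos ⟨hx'.1, hx'.2⟩, hfdef, hCdef]
    rw [setLIntegral_congr_fun hS (fun x hx => h1 x hx)]
    rw [← ofReal_integral_eq_lintegral_ofReal]
    · exact hfint.mono_set (hSsub.trans Ioo_subset_Icc_self)
    · exact (ae_restrict_iff' hS).2 (ae_of_all _ fun x hx =>
        hfnn x (Ioo_subset_Icc_self (hSsub hx)))
  have Hzero : ∀ S : Set ℝ, MeasurableSet S → (∀ x ∈ S, ¬(0 < x ∧ x < 1)) →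
      _root_.betaMeasure a b S = 0 := by
    intro S hS h
    rw [_root_.betaMeasure, withDensity_apply _ hS]
    have h0 : (fun x => ENNReal.ofReal (if 0 < x ∧ x < 1 then
        Real.Gamma (a + b) / (Real.Gamma a * Real.Gamma b) * x ^ (a - 1) * (1 - x) ^ (b - 1)
        else 0)) =ᵐ[volume.restrict S] (fun _ => (0:ENNReal)) := by
      rw [Filter.EventuallyEq, ae_restrict_iff' hS]
      exact ae_of_all _ fun x hx => by
        simp only [if_neg (h x hx), ENNReal.ofReal_zero]
    rw [lintegral_congr_ae h0, lintegral_zero]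
  clear_value C f
  -- slope bounds
  set sB : ℝ := u*(a+b)^2/(8*a) with hsBdef
  have hsB0 : 0 < sB := by rw [hsBdef]; positivity
  set E : ℝ := sB * u with hEdef
  have hEeq : E = t^2*(a+b)^2/(32*a) := by
    rw [hEdef, hsBdef, hudef]; ring
  clear_value E
  have hE2' : 2 ≤ E := by rw [hEeq]; exact hE2
  have hED' : D ≤ E := by rw [hEeq]; exact hED
  have hE0 : 0 < E := by linarith
  have hNa : (a+b)/a ≤ sB := by
    rw [hsBdef, div_le_div_iff₀ ha0 (by positivity)]
    nlinarith [mul_pos hN ha0]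
  have hsB_half : sB ≤ u*(a+b)^2/(4*a) - (a+b)/a := by
    have h : u*(a+b)^2/(4*a) = u*(a+b)^2/(8*a) + u*(a+b)^2/(8*a) := by ring
    rw [hsBdef] at *
    linarith
  clear_value sB
  set s : ℝ := BG a b c with hsdef
  have hs_le : s ≤ -sB := by
    have h := BG_plus_le ha hab hu0 (by rw [← hμdef]; exact huμ)
    rw [← hμdef, ← hcdef] at h
    rw [hsdef]
    have h2 : -(u*(a+b)^2/(4*a)) ≤ -sB := by
      have hpos : (0:ℝ) < (a+b)/a := by positivity
      linarith [hsB_half]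
    linarith
  have hs_neg : s < 0 := lt_of_le_of_lt hs_le (by linarith)
  clear_value s
  set s' : ℝ := BG a b c' with hs'def
  have hs'_ge : sB ≤ s' := by
    have h := BG_minus_ge ha hab hu0 (by rw [← hμdef]; exact huμ')
    rw [← hμdef, ← hc'def] at h
    rw [hs'def]
    linarith [hsB_half]
  have hs'_pos : 0 < s' := lt_of_lt_of_le hsB0 hs'_ge
  clear_value s'
  -- quarter-point slope nonneg (for lower denominator)
  have hq_pos : 0 ≤ BG a b (μ - t/4) := by
    have h := BG_minus_ge ha hab (show (0:ℝ) < t/4 by linarith) (by rw [← hμdef]; linarith)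
    rw [← hμdef] at h
    have h4 : (a+b)/a ≤ (t/4)*(a+b)^2/(4*a) := by
      rw [div_le_div_iff₀ ha0 (by positivity)]
      nlinarith [mul_pos hN ha0]
    linarith
  -- ===== upper tail =====
  have hup : _root_.betaMeasure a b (Ico (μ+t) 1) ≤ ENNReal.ofReal (Real.exp (-E)) := by
    set K : ℝ := C * Real.exp (Bg a b c - s*c) with hKdef
    have hK0 : 0 < K := by rw [hKdef]; positivity
    clear_value K
    have hpt : ∀ y ∈ Ico (μ+t) 1, f y ≤ K * Real.exp (s*y) := by
      intro y hy
      have hy0 : 0 < y := lt_of_lt_of_le (by linarith) hy.1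
      have hy1 : y < 1 := hy.2
      have hcy : c ≤ y := by rw [hcdef]; linarith [hy.1]
      have hmono := Bg_le_left a b ha1 hb1 hc0 hy1 hcy (le_of_eq hsdef.symm)
      calc f y = C * Real.exp (Bg a b y) := hfeq y ⟨hy0, hy1⟩
      _ ≤ C * Real.exp ((Bg a b c - s*c) + s*y) :=
          mul_le_mul_of_nonneg_left (Real.exp_le_exp.2 (by linarith)) hC0.le
      _ = K * Real.exp (s*y) := by rw [hKdef, mul_assoc, ← Real.exp_add]
    have hexpc : Continuous (fun y : ℝ => K * Real.exp (s*y)) :=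
      continuous_const.mul (Real.continuous_exp.comp (continuous_const.mul continuous_id))
    have hint1 : ∫ y in Ico (μ+t) 1, f y ≤ ∫ y in Ico (μ+t) 1, K * Real.exp (s*y) := by
      apply setIntegral_mono_on
      · exact hfint.mono_set (fun y hy => ⟨by linarith [hy.1], hy.2.le⟩)
      · exact (hexpc.integrableOn_Icc (a := μ+t) (b := 1)).mono_set Ico_subset_Icc_self
      · exact measurableSet_Ico
      · exact hpt
    have hint2 : ∫ y in Ico (μ+t) 1, K * Real.exp (s*y)
        = K * (Real.exp (s*1)/s - Real.exp (s*(μ+t))/s) := by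
      rw [← integral_Icc_eq_integral_Ico, integral_Icc_eq_integral_Ioc, integral_const_mul,
        integral_exp_mul_Ioc s (μ+t) 1 hs_neg.ne (by linarith)]
    have hint3 : K * (Real.exp (s*1)/s - Real.exp (s*(μ+t))/s)
        ≤ K * (Real.exp (s*(μ+t)) / (-s)) := by
      apply mul_le_mul_of_nonneg_left _ hK0.le
      have h1 : Real.exp (s*1)/s ≤ 0 :=
        div_nonpos_of_nonneg_of_nonpos (Real.exp_pos _).le hs_neg.le
      have h2 : Real.exp (s*(μ+t))/(-s) = -(Real.exp (s*(μ+t))/s) := by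
        rw [div_neg]
      linarith
    have hKs : K * (Real.exp (s*(μ+t))/(-s))
        ≤ C * Real.exp (Bg a b c) * (u * Real.exp (-E) / E) := by
      have heq : Bg a b c - s*c + s*(μ+t) = Bg a b c + s*u := by
        rw [hcdef, hudef]; ring
      have hexp : K * (Real.exp (s*(μ+t))/(-s))
          = C * Real.exp (Bg a b c) * (Real.exp (s*u) / (-s)) := by
        rw [hKdef,
          show C * Real.exp (Bg a b c - s*c) * (Real.exp (s*(μ+t))/(-s))
            = C * (Real.exp (Bg a b c - s*c) * Real.exp (s*(μ+t))) / (-s) by ring,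
          ← Real.exp_add, heq, Real.exp_add]
        ring
      rw [hexp]
      apply mul_le_mul_of_nonneg_left _ (by positivity)
      have h1 : Real.exp (s*u) ≤ Real.exp (-E) := by
        apply Real.exp_le_exp.2
        rw [hEdef]
        have h := mul_le_mul_of_nonneg_right hs_le hu0.le
        linarith
      have h2 : 1/(-s) ≤ u/E := by
        rw [div_le_div_iff₀ (by linarith) hE0, hEdef]
        have h := mul_le_mul_of_nonneg_left (by linarith [hs_le] : sB ≤ -s) hu0.le
        linarith
      calc Real.exp (s*u)/(-s) = Real.exp (s*u) * (1/(-s)) := by ring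
      _ ≤ Real.exp (-E) * (u/E) := mul_le_mul h1 h2
            (div_nonneg (by norm_num) (by linarith)) (Real.exp_pos _).le
      _ = u * Real.exp (-E)/E := by ring
    have hden : C * Real.exp (Bg a b c) * u ≤ ∫ y in Icc μ c, f y := by
      have hpt2 : ∀ y ∈ Icc μ c, C * Real.exp (Bg a b c) ≤ f y := by
        intro y hy
        have hy0 : 0 < y := lt_of_lt_of_le hμ0 hy.1
        have hy1 : y < 1 := lt_of_le_of_lt hy.2 hc1
        have hBGy : BG a b y ≤ 0 := by
          have h1 : BG a b y ≤ BG a b μ := BG_anti a b ha1 hb1 hμ0 hy1 hy.1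
          have h2 : BG a b μ ≤ 0 := by rw [hμdef]; exact BG_mu_le ha hab
          linarith
        have hmono := Bg_le_left a b ha1 hb1 (s := 0) hy0 hc1 hy.2 hBGy
        rw [hfeq y ⟨hy0, hy1⟩]
        apply mul_le_mul_of_nonneg_left (Real.exp_le_exp.2 (by linarith)) hC0.le
      calc C * Real.exp (Bg a b c) * u
          = ∫ _ in Icc μ c, C * Real.exp (Bg a b c) := by
            rw [setIntegral_const, measureReal_def, Real.volume_Icc, smul_eq_mul,
              ENNReal.toReal_ofReal (by rw [hcdef]; linarith : (0:ℝ) ≤ c - μ),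
              hcdef]
            ring
      _ ≤ ∫ y in Icc μ c, f y := by
            apply setIntegral_mono_on
            · exact integrableOn_const measure_Icc_lt_top.ne
            · exact hfint.mono_set (fun y hy =>
                ⟨le_trans hμ0.le hy.1, le_trans hy.2 hc1.le⟩)
            · exact measurableSet_Icc
            · exact hpt2
    have hden0 : 0 ≤ ∫ y in Icc μ c, f y := le_trans (by positivity) hden
    have hcomb : ∫ y in Ico (μ+t) 1, f y ≤ Real.exp (-E) * ∫ y in Icc μ c, f y := by
      have h1 : ∫ y in Ico (μ+t) 1, f y ≤ C * Real.exp (Bg a b c) * (u * Real.exp (-E)/E) :=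
        le_trans hint1 (le_trans (le_of_eq hint2) (le_trans hint3 hKs))
      have h2 : C * Real.exp (Bg a b c) * (u * Real.exp (-E)/E)
          = (Real.exp (-E)/E) * (C * Real.exp (Bg a b c) * u) := by ring
      calc ∫ y in Ico (μ+t) 1, f y
          ≤ (Real.exp (-E)/E) * (C * Real.exp (Bg a b c) * u) := by rw [← h2]; exact h1
      _ ≤ (Real.exp (-E)/E) * ∫ y in Icc μ c, f y :=
            mul_le_mul_of_nonneg_left hden (by positivity)
      _ ≤ Real.exp (-E) * ∫ y in Icc μ c, f y := by
            apply mul_le_mul_of_nonneg_right _ hden0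
            rw [div_le_iff₀ hE0]
            have h := mul_le_mul_of_nonneg_left hE2' (Real.exp_pos (-E)).le
            linarith [Real.exp_pos (-E)]
    have hU2sub : Ico (μ+t) 1 ⊆ Ioo 0 1 := fun y hy => ⟨lt_of_lt_of_le (by linarith) hy.1, hy.2⟩
    have hIccsub : Icc μ c ⊆ Ioo 0 1 := fun y hy =>
      ⟨lt_of_lt_of_le hμ0 hy.1, lt_of_le_of_lt hy.2 hc1⟩
    rw [Hbeta _ measurableSet_Ico hU2sub]
    calc ENNReal.ofReal (∫ y in Ico (μ+t) 1, f y)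
        ≤ ENNReal.ofReal (Real.exp (-E) * ∫ y in Icc μ c, f y) := ENNReal.ofReal_le_ofReal hcomb
    _ = ENNReal.ofReal (Real.exp (-E)) * ENNReal.ofReal (∫ y in Icc μ c, f y) :=
        ENNReal.ofReal_mul (Real.exp_pos _).le
    _ = ENNReal.ofReal (Real.exp (-E)) * _root_.betaMeasure a b (Icc μ c) := by
        rw [Hbeta _ measurableSet_Icc hIccsub]
    _ ≤ ENNReal.ofReal (Real.exp (-E)) * 1 :=
        mul_le_mul_right (le_trans (measure_mono (subset_univ _)) hβ) _
    _ = ENNReal.ofReal (Real.exp (-E)) := mul_one _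
  -- ===== lower tail =====
  have hlow : _root_.betaMeasure a b (Ioc 0 (μ-t)) ≤ ENNReal.ofReal (Real.exp (-E)) := by
    set K : ℝ := C * Real.exp (Bg a b c' - s'*c') with hKdef
    have hK0 : 0 < K := by rw [hKdef]; positivity
    clear_value K
    have hpt : ∀ y ∈ Ioc 0 (μ-t), f y ≤ K * Real.exp (s'*y) := by
      intro y hy
      have hy0 : 0 < y := hy.1
      have hy1 : y < 1 := by
        have := hy.2; linarith
      have hcy : y ≤ c' := by
        rw [hc'def]; linarith [hy.2]
      have hmono := Bg_le_right a b ha1 hb1 hy0 hc'1 hcy (le_of_eq hs'def)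
      calc f y = C * Real.exp (Bg a b y) := hfeq y ⟨hy0, hy1⟩
      _ ≤ C * Real.exp ((Bg a b c' - s'*c') + s'*y) :=
          mul_le_mul_of_nonneg_left (Real.exp_le_exp.2 (by linarith)) hC0.le
      _ = K * Real.exp (s'*y) := by rw [hKdef, mul_assoc, ← Real.exp_add]
    have hexpc : Continuous (fun y : ℝ => K * Real.exp (s'*y)) :=
      continuous_const.mul (Real.continuous_exp.comp (continuous_const.mul continuous_id))
    have hint1 : ∫ y in Ioc 0 (μ-t), f y ≤ ∫ y in Ioc 0 (μ-t), K * Real.exp (s'*y) := by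
      apply setIntegral_mono_on
      · exact hfint.mono_set (fun y hy => ⟨hy.1.le, by linarith [hy.2]⟩)
      · exact (hexpc.integrableOn_Icc (a := 0) (b := μ-t)).mono_set Ioc_subset_Icc_self
      · exact measurableSet_Ioc
      · exact hpt
    have hint2 : ∫ y in Ioc 0 (μ-t), K * Real.exp (s'*y)
        = K * (Real.exp (s'*(μ-t))/s' - Real.exp (s'*0)/s') := by
      rw [integral_const_mul, integral_exp_mul_Ioc s' 0 (μ-t) hs'_pos.ne' hμt0]
    have hint3 : K * (Real.exp (s'*(μ-t))/s' - Real.exp (s'*0)/s')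
        ≤ K * (Real.exp (s'*(μ-t)) / s') := by
      apply mul_le_mul_of_nonneg_left _ hK0.le
      have h1 : 0 ≤ Real.exp (s'*0)/s' := div_nonneg (Real.exp_pos _).le hs'_pos.le
      linarith
    have hKs : K * (Real.exp (s'*(μ-t))/s')
        ≤ C * Real.exp (Bg a b c') * (u * Real.exp (-E) / E) := by
      have heq : Bg a b c' - s'*c' + s'*(μ-t) = Bg a b c' + -(s'*u) := by
        rw [hc'def, hudef]; ring
      have hexp : K * (Real.exp (s'*(μ-t))/s')
          = C * Real.exp (Bg a b c') * (Real.exp (-(s'*u)) / s') := by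
        rw [hKdef,
          show C * Real.exp (Bg a b c' - s'*c') * (Real.exp (s'*(μ-t))/s')
            = C * (Real.exp (Bg a b c' - s'*c') * Real.exp (s'*(μ-t))) / s' by ring,
          ← Real.exp_add, heq, Real.exp_add]
        ring
      rw [hexp]
      apply mul_le_mul_of_nonneg_left _ (by positivity)
      have h1 : Real.exp (-(s'*u)) ≤ Real.exp (-E) := by
        apply Real.exp_le_exp.2
        rw [hEdef]
        have h := mul_le_mul_of_nonneg_right hs'_ge hu0.le
        linarith
      have h2 : 1/s' ≤ u/E := by
        rw [div_le_div_iff₀ hs'_pos hE0, hEdef]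
        have h := mul_le_mul_of_nonneg_left hs'_ge hu0.le
        linarith
      calc Real.exp (-(s'*u))/s' = Real.exp (-(s'*u)) * (1/s') := by ring
      _ ≤ Real.exp (-E) * (u/E) := mul_le_mul h1 h2
            (div_nonneg (by norm_num) hs'_pos.le) (Real.exp_pos _).le
      _ = u * Real.exp (-E)/E := by ring
    have hq1 : μ - t/4 < 1 := by linarith
    have hden : C * Real.exp (Bg a b c') * (u/2) ≤ ∫ y in Icc c' (μ-t/4), f y := by
      have hpt2 : ∀ y ∈ Icc c' (μ-t/4), C * Real.exp (Bg a b c') ≤ f y := by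
        intro y hy
        have hy0 : 0 < y := lt_of_lt_of_le hc'0 hy.1
        have hy1 : y < 1 := lt_of_le_of_lt hy.2 hq1
        have hBGy : 0 ≤ BG a b y :=
          le_trans hq_pos (BG_anti a b ha1 hb1 hy0 hq1 hy.2)
        have hmono := Bg_le_right a b ha1 hb1 (s := 0) hc'0 hy1 hy.1 hBGy
        rw [hfeq y ⟨hy0, hy1⟩]
        apply mul_le_mul_of_nonneg_left (Real.exp_le_exp.2 (by linarith)) hC0.le
      calc C * Real.exp (Bg a b c') * (u/2)
          = ∫ _ in Icc c' (μ-t/4), C * Real.exp (Bg a b c') := by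
            rw [setIntegral_const, measureReal_def, Real.volume_Icc, smul_eq_mul,
              ENNReal.toReal_ofReal (by rw [hc'def, hudef]; linarith : (0:ℝ) ≤ μ - t/4 - c'),
              hc'def, hudef]
            ring
      _ ≤ ∫ y in Icc c' (μ-t/4), f y := by
            apply setIntegral_mono_on
            · exact integrableOn_const measure_Icc_lt_top.ne
            · exact hfint.mono_set (fun y hy =>
                ⟨le_trans hc'0.le hy.1, le_trans hy.2 hq1.le⟩)
            · exact measurableSet_Icc
            · exact hpt2
    have hden0 : 0 ≤ ∫ y in Icc c' (μ-t/4), f y := le_trans (by positivity) hden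
    have hcomb : ∫ y in Ioc 0 (μ-t), f y ≤ Real.exp (-E) * ∫ y in Icc c' (μ-t/4), f y := by
      have h1 : ∫ y in Ioc 0 (μ-t), f y ≤ C * Real.exp (Bg a b c') * (u * Real.exp (-E)/E) :=
        le_trans hint1 (le_trans (le_of_eq hint2) (le_trans hint3 hKs))
      have h2 : C * Real.exp (Bg a b c') * (u * Real.exp (-E)/E)
          = (2*Real.exp (-E)/E) * (C * Real.exp (Bg a b c') * (u/2)) := by ring
      calc ∫ y in Ioc 0 (μ-t), f y
          ≤ (2*Real.exp (-E)/E) * (C * Real.exp (Bg a b c') * (u/2)) := by rw [← h2]; exact h1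
      _ ≤ (2*Real.exp (-E)/E) * ∫ y in Icc c' (μ-t/4), f y :=
            mul_le_mul_of_nonneg_left hden (by positivity)
      _ ≤ Real.exp (-E) * ∫ y in Icc c' (μ-t/4), f y := by
            apply mul_le_mul_of_nonneg_right _ hden0
            rw [div_le_iff₀ hE0]
            have h := mul_le_mul_of_nonneg_left hE2' (Real.exp_pos (-E)).le
            linarith [Real.exp_pos (-E)]
    have hU1sub : Ioc 0 (μ-t) ⊆ Ioo 0 1 := fun y hy => ⟨hy.1, by linarith [hy.2]⟩
    have hIccsub : Icc c' (μ-t/4) ⊆ Ioo 0 1 := fun y hy =>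
      ⟨lt_of_lt_of_le hc'0 hy.1, lt_of_le_of_lt hy.2 hq1⟩
    rw [Hbeta _ measurableSet_Ioc hU1sub]
    calc ENNReal.ofReal (∫ y in Ioc 0 (μ-t), f y)
        ≤ ENNReal.ofReal (Real.exp (-E) * ∫ y in Icc c' (μ-t/4), f y) :=
        ENNReal.ofReal_le_ofReal hcomb
    _ = ENNReal.ofReal (Real.exp (-E)) * ENNReal.ofReal (∫ y in Icc c' (μ-t/4), f y) :=
        ENNReal.ofReal_mul (Real.exp_pos _).le
    _ = ENNReal.ofReal (Real.exp (-E)) * _root_.betaMeasure a b (Icc c' (μ-t/4)) := by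
        rw [Hbeta _ measurableSet_Icc hIccsub]
    _ ≤ ENNReal.ofReal (Real.exp (-E)) * 1 :=
        mul_le_mul_right (le_trans (measure_mono (subset_univ _)) hβ) _
    _ = ENNReal.ofReal (Real.exp (-E)) := mul_one _
  -- ===== assembly =====
  have hsub : {x : ℝ | t ≤ |x - μ|} ⊆ (Iic 0 ∪ Ici 1) ∪ (Ioc 0 (μ-t) ∪ Ico (μ+t) 1) := by
    intro x hx
    simp only [mem_setOf_eq] at hx
    by_cases hx0 : x ≤ 0
    · exact Or.inl (Or.inl hx0)
    by_cases hx1 : (1:ℝ) ≤ x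
    · exact Or.inl (Or.inr hx1)
    push_neg at hx0 hx1
    rcases le_abs.1 hx with h | h
    · exact Or.inr (Or.inr ⟨by linarith, hx1⟩)
    · exact Or.inr (Or.inl ⟨hx0, by linarith⟩)
  have hz : _root_.betaMeasure a b (Iic 0 ∪ Ici 1) = 0 := by
    apply Hzero _ (measurableSet_Iic.union measurableSet_Ici)
    intro x hx
    rcases hx with h | h
    · rintro ⟨h0, _⟩; exact absurd h (not_le.2 h0)
    · rintro ⟨_, h1⟩; exact absurd h (not_le.2 h1)
  calc _root_.betaMeasure a b {x | t ≤ |x - μ|}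
      ≤ _root_.betaMeasure a b ((Iic 0 ∪ Ici 1) ∪ (Ioc 0 (μ-t) ∪ Ico (μ+t) 1)) := measure_mono hsub
  _ ≤ _root_.betaMeasure a b (Iic 0 ∪ Ici 1) + _root_.betaMeasure a b (Ioc 0 (μ-t) ∪ Ico (μ+t) 1) :=
      measure_union_le _ _
  _ ≤ 0 + (_root_.betaMeasure a b (Ioc 0 (μ-t)) + _root_.betaMeasure a b (Ico (μ+t) 1)) := by
      rw [hz]; exact add_le_add le_rfl (measure_union_le _ _)
  _ ≤ 0 + (ENNReal.ofReal (Real.exp (-E)) + ENNReal.ofReal (Real.exp (-E))) :=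
      add_le_add le_rfl (add_le_add hlow hup)
  _ = ENNReal.ofReal (Real.exp (-E)) + ENNReal.ofReal (Real.exp (-E)) := zero_add _
  _ ≤ ENNReal.ofReal (2 * Real.exp (-D)) := by
      rw [← ENNReal.ofReal_add (Real.exp_pos _).le (Real.exp_pos _).le]
      apply ENNReal.ofReal_le_ofReal
      have hle : Real.exp (-E) ≤ Real.exp (-D) := Real.exp_le_exp.2 (by linarith)
      linarith

set_option maxHeartbeats 1600000

/-- **Beta concentration.** Along sequences `m k > n k → ∞` with `n k / m k → c₃`,
`0 ≤ c₃ < 1`, there is a constant `c₁` such that for all sufficiently large `k`,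
if `Z ∼ Beta(n k / 2, m k / 2)` then
`P(|Z − n/(m+n)| ≥ c₁ n^{3/4}/(m+n)) ≤ 2 exp(−n^{1/2})`. -/
theorem beta_concentration
    (m n : ℕ → ℕ) (hmn : ∀ k, n k < m k)
    (hn : Tendsto (fun k => (n k : ℝ)) atTop atTop)
    (c₃ : ℝ) (hc₃0 : 0 ≤ c₃) (hc₃1 : c₃ < 1)
    (hratio : Tendsto (fun k => (n k : ℝ) / (m k : ℝ)) atTop (nhds c₃)) :
    ∃ c₁ > (0 : ℝ), ∃ K : ℕ, ∀ k ≥ K,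
      ∀ (Ω : Type) (_ : MeasurableSpace Ω) (P : Measure Ω), IsProbabilityMeasure P →
        ∀ Z : Ω → ℝ, Measurable Z →
          Measure.map Z P = _root_.betaMeasure ((n k : ℝ) / 2) ((m k : ℝ) / 2) →
          P {ω | c₁ * (n k : ℝ) ^ ((3 : ℝ) / 4) / ((m k : ℝ) + n k)
                  ≤ |Z ω - (n k : ℝ) / ((m k : ℝ) + n k)|}
            ≤ ENNReal.ofReal (2 * Real.exp (-(n k : ℝ) ^ ((1 : ℝ) / 2))) := by
  refine ⟨8, by norm_num, ?_⟩
  obtain ⟨K, hK⟩ := Filter.eventually_atTop.1 (hn.eventually_ge_atTop (4096:ℝ))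
  refine ⟨K, ?_⟩
  intro k hk Ω instΩ P hP Z hZ hmap
  have h4096 : (4096:ℝ) ≤ (n k : ℝ) := hK k hk
  set nk : ℝ := (n k : ℝ) with hnkdef
  set mk : ℝ := (m k : ℝ) with hmkdef
  have hnk0 : (0:ℝ) < nk := by linarith
  have hmn' : nk < mk := by
    rw [hnkdef, hmkdef]
    exact_mod_cast hmn k
  have hmn0 : (0:ℝ) < mk + nk := by linarith
  clear_value nk mk
  set t : ℝ := 8 * nk ^ ((3:ℝ)/4) / (mk + nk) with htdef
  clear_value t
  -- rpow arithmetic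
  have hq : (0:ℝ) < nk ^ ((3:ℝ)/4) := Real.rpow_pos_of_pos hnk0 _
  have h14 : (8:ℝ) ≤ nk ^ ((1:ℝ)/4) := by
    have h1 : (4096:ℝ) ^ ((1:ℝ)/4) ≤ nk ^ ((1:ℝ)/4) :=
      Real.rpow_le_rpow (by norm_num) h4096 (by norm_num)
    have h4 : (4096:ℝ) ^ ((1:ℝ)/4) = 8 := by
      rw [show (4096:ℝ) = 8 ^ (4:ℕ) by norm_num, ← Real.rpow_natCast 8 4,
        ← Real.rpow_mul (by norm_num)]
      norm_num
    linarith
  have hsplit : nk ^ ((3:ℝ)/4) * nk ^ ((1:ℝ)/4) = nk := by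
    rw [← Real.rpow_add hnk0]
    norm_num
  have hhalf : nk ^ ((3:ℝ)/4) * nk ^ ((3:ℝ)/4) = nk ^ ((1:ℝ)/2) * nk := by
    rw [show nk ^ ((1:ℝ)/2) * nk = nk ^ ((1:ℝ)/2) * nk ^ (1:ℝ) by rw [Real.rpow_one],
      ← Real.rpow_add hnk0, ← Real.rpow_add hnk0]
    norm_num
  have hcube : nk ^ ((3:ℝ)/4) = (nk ^ ((1:ℝ)/4))^(3:ℕ) := by
    rw [← Real.rpow_natCast (nk ^ ((1:ℝ)/4)) 3, ← Real.rpow_mul hnk0.le]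
    norm_num
  have h34 : (512:ℝ) ≤ nk ^ ((3:ℝ)/4) := by
    rw [hcube]
    have h64 : (64:ℝ) ≤ (nk ^ ((1:ℝ)/4))^(2:ℕ) := by nlinarith [h14]
    nlinarith [h14, h64]
  have hD2 : (2:ℝ) ≤ nk ^ ((1:ℝ)/2) := by
    have hsq : nk ^ ((1:ℝ)/2) = (nk ^ ((1:ℝ)/4))^(2:ℕ) := by
      rw [← Real.rpow_natCast (nk ^ ((1:ℝ)/4)) 2, ← Real.rpow_mul hnk0.le]
      norm_num
    rw [hsq]
    nlinarith [h14]
  -- hypotheses of the core lemma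
  have ht0 : 0 < t := by
    rw [htdef]
    exact div_pos (by positivity) hmn0
  have hab2 : nk/2 + mk/2 = (mk+nk)/2 := by ring
  have hμeq : (nk/2)/(nk/2 + mk/2) = nk/(mk+nk) := by
    rw [hab2, show (mk+nk)/2 = (mk+nk)/2 by rfl, div_div_div_cancel_right₀ (two_ne_zero) nk (mk+nk)]
  have htN_eq : t * (nk/2 + mk/2) = 4 * nk ^ ((3:ℝ)/4) := by
    rw [htdef, hab2]
    field_simp
    ring
  have htμ0 : t ≤ (nk/2)/(nk/2 + mk/2) := by
    have hnum : 8*nk^((3:ℝ)/4) ≤ nk := by nlinarith [hq, h14, hsplit]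
    rw [hμeq, htdef, div_le_div_iff₀ hmn0 hmn0]
    nlinarith [mul_nonneg (by linarith [hnum] : (0:ℝ) ≤ nk - 8*nk^((3:ℝ)/4)) hmn0.le]
  have htN : 16 ≤ t * (nk/2 + mk/2) := by
    rw [htN_eq]
    linarith
  have hEeq : t^2 * (nk/2 + mk/2)^2 / (32*(nk/2)) = nk ^ ((1:ℝ)/2) := by
    rw [show t^2 * (nk/2 + mk/2)^2 = (t * (nk/2 + mk/2))^2 by ring, htN_eq,
      show (4 * nk ^ ((3:ℝ)/4))^2 = 16*(nk ^ ((3:ℝ)/4) * nk ^ ((3:ℝ)/4)) by ring, hhalf,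
      show 32*(nk/2) = 16*nk by ring]
    field_simp
  have hβ : _root_.betaMeasure (nk/2) (mk/2) Set.univ ≤ 1 := by
    have h1 := Measure.map_apply hZ MeasurableSet.univ (f := Z) (μ := P)
    rw [hmap] at h1
    rw [Set.preimage_univ] at h1
    rw [h1, measure_univ]
  have hsetmeas : MeasurableSet {x : ℝ | t ≤ |x - nk/(mk+nk)|} :=
    (isClosed_le continuous_const ((continuous_id.sub continuous_const).abs)).measurableSet
  have hPmap : P {ω | t ≤ |Z ω - nk/(mk+nk)|}
      = Measure.map Z P {x | t ≤ |x - nk/(mk+nk)|} :=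
    (Measure.map_apply hZ hsetmeas).symm
  have hgoal : P {ω | t ≤ |Z ω - nk/(mk+nk)|}
      ≤ ENNReal.ofReal (2 * Real.exp (-nk ^ ((1:ℝ)/2))) := by
    rw [hPmap, hmap, ← hμeq]
    exact betaMeasure_tail_le (nk/2) (mk/2) t (nk ^ ((1:ℝ)/2))
      (by linarith) (by linarith) ht0 htμ0 htN
      (by rw [hEeq]; exact hD2) (le_of_eq hEeq.symm) hβ
  exact hgoal
end

section
/- Let X ∈ ℝ^{n×p} with columns X₁,…,X_p, let S ⊂ {1,…,p} with |S| = s ≥ 1, and suppose X(S)ᵀX(S) is invertible. Assume the columns are normalized (‖X_j‖₂ = 1 for all j) and that the pairwise inner products satisfy max_{j≠k} |X_jᵀX_k| ≤ c/(2s−1) for some constant 0 ≤ c < 1. Then X satisfies the irrepresentable condition: ‖X(S^c)ᵀX(S)(X(S)ᵀX(S))⁻¹ sign(β*(S))‖_∞ ≤ 1 − η for some η ∈ (0,1], for any sign vector sign(β*(S)) ∈ {−1,+1}^s. -/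
open Matrix

/-- **Zhao–Yu sufficient condition (Corollary 2) for the irrepresentable condition.**
If the columns of `X` are normalized (`‖X_j‖₂ = 1`) and the pairwise inner products
satisfy `max_{j≠k} |X_jᵀX_k| ≤ c/(2s−1)` with `0 ≤ c < 1`, where `s = |S| ≥ 1` and
`X(S)ᵀX(S)` is invertible, then the irrepresentable condition holds: there is
`η ∈ (0,1]` such that for every sign vector `b ∈ {−1,+1}^S`,
`‖X(Sᶜ)ᵀ X(S) (X(S)ᵀX(S))⁻¹ b‖_∞ ≤ 1 − η`. -/
theorem zhao_yu_irrepresentable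
    (n p : ℕ) (X : Matrix (Fin n) (Fin p) ℝ)
    (S : Finset (Fin p)) (s : ℕ) (hs : S.card = s) (hs1 : 1 ≤ s)
    (XS : Matrix (Fin n) {j // j ∈ S} ℝ) (hXS : XS = Matrix.of fun i j => X i j.1)
    (XSc : Matrix (Fin n) {j // j ∉ S} ℝ) (hXSc : XSc = Matrix.of fun i j => X i j.1)
    (hinv : IsUnit (XSᵀ * XS).det)
    (hnorm : ∀ j : Fin p, ∑ i, (X i j) ^ 2 = 1)
    (c : ℝ) (hc0 : 0 ≤ c) (hc1 : c < 1)
    (hpair : ∀ j k : Fin p, j ≠ k →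
      |∑ i, X i j * X i k| ≤ c / (2 * (s : ℝ) - 1)) :
    ∃ η : ℝ, 0 < η ∧ η ≤ 1 ∧
      ∀ b : {j // j ∈ S} → ℝ, (∀ j, b j = 1 ∨ b j = -1) →
        ∀ k : {j // j ∉ S},
          |(XScᵀ * XS * (XSᵀ * XS)⁻¹).mulVec b k| ≤ 1 - η := by
  have hs1' : (1:ℝ) ≤ (s:ℝ) := by exact_mod_cast hs1
  set θ : ℝ := c / (2 * (s:ℝ) - 1) with hθdef
  have h2s : (0:ℝ) < 2*(s:ℝ) - 1 := by linarith
  have hθ0 : 0 ≤ θ := div_nonneg hc0 h2s.le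
  have hθc : θ * (2*(s:ℝ) - 1) = c := div_mul_cancel₀ c h2s.ne'
  refine ⟨1 - c, by linarith, by linarith, ?_⟩
  intro b hb k
  have h1c : 1 - (1 - c) = c := by ring
  rw [h1c]
  -- nonempty index
  have hSne : S.Nonempty := Finset.card_pos.mp (by omega)
  have : Nonempty {j // j ∈ S} := ⟨⟨hSne.choose, hSne.choose_spec⟩⟩
  have hcard : Fintype.card {j // j ∈ S} = s := by rw [Fintype.card_coe, hs]
  set v : {j // j ∈ S} → ℝ := (XSᵀ * XS)⁻¹.mulVec b with hvdef
  have hv : (XSᵀ * XS).mulVec v = b := by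
    rw [hvdef, mulVec_mulVec, Matrix.mul_nonsing_inv _ hinv, one_mulVec]
  have hAdiag : ∀ j : {j // j ∈ S}, (XSᵀ * XS) j j = 1 := by
    intro j
    simp only [hXS, Matrix.mul_apply, transpose_apply, of_apply]
    simpa [sq] using hnorm j.1
  have hAoff : ∀ j k : {j // j ∈ S}, j ≠ k → |(XSᵀ * XS) j k| ≤ θ := by
    intro j k hjk
    simp only [hXS, Matrix.mul_apply, transpose_apply, of_apply]
    exact hpair j.1 k.1 (fun h => hjk (Subtype.ext h))
  set M : ℝ := Finset.univ.sup' Finset.univ_nonempty (fun j => |v j|) with hMdef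
  have hMle : ∀ j, |v j| ≤ M := fun j =>
    Finset.le_sup' (fun j => |v j|) (Finset.mem_univ j)
  have hM0 : 0 ≤ M := le_trans (abs_nonneg _) (hMle Classical.ofNonempty)
  -- M ≤ 1 + (s-1) θ M
  have hMbound : M ≤ 1 + ((s:ℝ) - 1) * θ * M := by
    apply Finset.sup'_le
    intro j _
    have hj := congrFun hv j
    simp only [mulVec, dotProduct] at hj
    have hsplit : ∑ k', (XSᵀ * XS) j k' * v k' =
        (XSᵀ * XS) j j * v j + ∑ k' ∈ Finset.univ.erase j, (XSᵀ * XS) j k' * v k' := by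
      rw [← Finset.add_sum_erase _ _ (Finset.mem_univ j)]
    rw [hsplit, hAdiag j, one_mul] at hj
    have hvj : v j = b j - ∑ k' ∈ Finset.univ.erase j, (XSᵀ * XS) j k' * v k' := by
      linarith [hj]
    have hbj : |b j| = 1 := by rcases hb j with h | h <;> simp [h]
    have hsum : |∑ k' ∈ Finset.univ.erase j, (XSᵀ * XS) j k' * v k'| ≤
        ((s:ℝ) - 1) * (θ * M) := by
      calc |∑ k' ∈ Finset.univ.erase j, (XSᵀ * XS) j k' * v k'|
          ≤ ∑ k' ∈ Finset.univ.erase j, |(XSᵀ * XS) j k' * v k'| :=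
            Finset.abs_sum_le_sum_abs _ _
        _ ≤ ∑ _k' ∈ Finset.univ.erase j, θ * M := by
            apply Finset.sum_le_sum
            intro k' hk'
            rw [abs_mul]
            exact mul_le_mul (hAoff j k' (Ne.symm (Finset.ne_of_mem_erase hk')))
              (hMle k') (abs_nonneg _) hθ0
        _ = ((s:ℝ) - 1) * (θ * M) := by
            rw [Finset.sum_const, nsmul_eq_mul]
            congr 1
            rw [Finset.card_erase_of_mem (Finset.mem_univ j), Finset.card_univ, hcard]
            push_cast [Nat.cast_sub hs1]
            ring_nf
    calc |v j| ≤ |b j| + |∑ k' ∈ Finset.univ.erase j, (XSᵀ * XS) j k' * v k'| := by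
          rw [hvj]; exact abs_sub _ _
      _ ≤ 1 + ((s:ℝ) - 1) * (θ * M) := by rw [hbj]; linarith
      _ = 1 + ((s:ℝ) - 1) * θ * M := by ring
  -- denominator positivity and final bound
  have hd : ((s:ℝ) - 1) * θ < 1 := by
    rw [hθdef, mul_div_assoc', div_lt_one h2s]
    nlinarith [mul_le_mul_of_nonneg_left hc1.le (by linarith : (0:ℝ) ≤ (s:ℝ) - 1)]
  have hM1 : (1 - ((s:ℝ) - 1) * θ) * M ≤ 1 := by nlinarith [hMbound]
  have hkey : (s:ℝ) * θ ≤ c * (1 - ((s:ℝ) - 1) * θ) := by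
    have hid : c * (1 - ((s:ℝ) - 1) * θ) - (s:ℝ) * θ = θ * ((s:ℝ) - 1) * (1 - c) := by
      rw [← hθc]; ring
    nlinarith [hid, mul_nonneg (mul_nonneg hθ0 (by linarith : (0:ℝ) ≤ (s:ℝ) - 1))
      (by linarith : (0:ℝ) ≤ 1 - c)]
  -- final bound
  have hrw : (XScᵀ * XS * (XSᵀ * XS)⁻¹).mulVec b = (XScᵀ * XS).mulVec v := by
    rw [hvdef, mulVec_mulVec, Matrix.mul_assoc]
  rw [hrw]
  have hBoff : ∀ j : {j // j ∈ S}, |(XScᵀ * XS) k j| ≤ θ := by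
    intro j
    simp only [hXS, hXSc, Matrix.mul_apply, transpose_apply, of_apply]
    exact hpair k.1 j.1 (fun h => k.2 (h ▸ j.2))
  have hsum : |(XScᵀ * XS).mulVec v k| ≤ (s:ℝ) * (θ * M) := by
    simp only [mulVec, dotProduct]
    calc |∑ j, (XScᵀ * XS) k j * v j| ≤ ∑ j, |(XScᵀ * XS) k j * v j| :=
          Finset.abs_sum_le_sum_abs _ _
      _ ≤ ∑ _j : {j // j ∈ S}, θ * M := by
          apply Finset.sum_le_sum
          intro j _
          rw [abs_mul]
          exact mul_le_mul (hBoff j) (hMle j) (abs_nonneg _) hθ0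
      _ = (s:ℝ) * (θ * M) := by
          rw [Finset.sum_const, nsmul_eq_mul, Finset.card_univ, hcard]
  calc |(XScᵀ * XS).mulVec v k| ≤ (s:ℝ) * (θ * M) := hsum
    _ ≤ c := by
        nlinarith [mul_le_mul_of_nonneg_right hkey hM0,
          mul_le_mul_of_nonneg_left hM1 hc0]
end

section
/- Consider the linear model Y = Xβ* + ε with ε ∼ N(0, σ²I_n), n ≥ p, rank(X) = p, and Λ_min((1/n)XᵀX) ≥ C̃_min > 0. Let F = U D⁻¹Uᵀ be the Puffer transformation (X = UDVᵀ its SVD), X̃ = FX, Ỹ = FY, and β̃(λ) = argmin_b (1/2)‖Ỹ − X̃b‖₂² + λ‖b‖₁. If min_{j∈S}|β*_j| ≥ 2λ (S the support of β*), then with probability at least 1 − 2p·exp(−nλ²C̃_min/(2σ²)), sign(β̃(λ)) = sign(β*). -/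
open Matrix MeasureTheory ProbabilityTheory

/-- A random vector is (jointly) Gaussian with mean `m` and covariance matrix `C` if
every linear functional of it is a real Gaussian with corresponding mean and variance. -/
def IsGaussianVector {Ω : Type*} [MeasurableSpace Ω] (P : Measure Ω) {n : ℕ}
    (X : Ω → Fin n → ℝ) (m : Fin n → ℝ) (C : Matrix (Fin n) (Fin n) ℝ) : Prop :=
  ∀ a : Fin n → ℝ,
    Measure.map (fun ω => ∑ i, a i * X ω i) P
      = gaussianReal (∑ i, a i * m i) (Real.toNNReal (a ⬝ᵥ C.mulVec a))

section Aux

lemma gaussian_upper_tail {v : NNReal} (hv : v ≠ 0) {lam : ℝ} (hlam : 0 < lam) :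
    gaussianReal 0 v {x | lam ≤ x} ≤ ENNReal.ofReal (Real.exp (-(lam^2)/(2*(v:ℝ)))) := by
  have hvpos : (0:ℝ) < (v:ℝ) := by
    exact_mod_cast pos_iff_ne_zero.mpr hv
  set t : ℝ := lam / v with ht
  have htpos : 0 < t := div_pos hlam hvpos
  have key : ∀ x : ℝ, gaussianPDFReal 0 v x * Real.exp (t*(x - lam))
      = Real.exp (t^2*(v:ℝ)/2 - t*lam) * gaussianPDFReal (t*v) v x := by
    intro x
    have hexp : -(x - 0)^2/(2*(v:ℝ)) + t*(x-lam)
        = (t^2*(v:ℝ)/2 - t*lam) + (-(x - t*(v:ℝ))^2/(2*(v:ℝ))) := by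
      field_simp
      ring
    simp only [gaussianPDFReal]
    rw [mul_assoc, ← Real.exp_add, hexp, Real.exp_add]
    ring
  have hint : Integrable (fun x => gaussianPDFReal 0 v x * Real.exp (t*(x - lam))) := by
    simp_rw [key]
    exact (integrable_gaussianPDFReal (t*v) v).const_mul _
  have hs : MeasurableSet {x : ℝ | lam ≤ x} := measurableSet_le measurable_const measurable_id
  rw [gaussianReal_apply_eq_integral _ hv]
  apply ENNReal.ofReal_le_ofReal
  have step1 : ∫ x in {x : ℝ | lam ≤ x}, gaussianPDFReal 0 v x
      ≤ ∫ x in {x : ℝ | lam ≤ x}, gaussianPDFReal 0 v x * Real.exp (t*(x - lam)) := by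
    apply setIntegral_mono_on (integrable_gaussianPDFReal 0 v).restrict hint.restrict hs
    intro x hx
    nth_rewrite 1 [← mul_one (gaussianPDFReal 0 v x)]
    apply mul_le_mul_of_nonneg_left _ (gaussianPDFReal_nonneg 0 v x)
    rw [← Real.exp_zero]
    apply Real.exp_le_exp.mpr
    have : lam ≤ x := hx
    nlinarith
  have step2 : ∫ x in {x : ℝ | lam ≤ x}, gaussianPDFReal 0 v x * Real.exp (t*(x - lam))
      ≤ ∫ x, gaussianPDFReal 0 v x * Real.exp (t*(x - lam)) := by
    apply setIntegral_le_integral hint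
    filter_upwards with x
    exact mul_nonneg (gaussianPDFReal_nonneg 0 v x) (Real.exp_nonneg _)
  have step3 : ∫ x, gaussianPDFReal 0 v x * Real.exp (t*(x - lam))
      = Real.exp (-(lam^2)/(2*(v:ℝ))) := by
    simp_rw [key]
    rw [integral_const_mul, integral_gaussianPDFReal_eq_one _ hv, mul_one]
    congr 1
    rw [ht]
    field_simp
    ring
  linarith

lemma gaussian_abs_tail {v : NNReal} {V lam : ℝ} (hV : 0 < V) (hvV : (v:ℝ) ≤ V)
    (hlam : 0 < lam) :
    gaussianReal 0 v {x | lam ≤ |x|} ≤ ENNReal.ofReal (2 * Real.exp (-(lam^2)/(2*V))) := by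
  by_cases hv : v = 0
  · subst hv
    rw [gaussianReal_zero_var]
    rw [Measure.dirac_apply' _ ((isClosed_le continuous_const continuous_abs).measurableSet)]
    have : (0:ℝ) ∉ {x : ℝ | lam ≤ |x|} := by simp [abs_of_nonneg]; linarith
    rw [Set.indicator_of_notMem this]
    positivity
  · have hvpos : (0:ℝ) < (v:ℝ) := by exact_mod_cast pos_iff_ne_zero.mpr hv
    have hmono : Real.exp (-(lam^2)/(2*(v:ℝ))) ≤ Real.exp (-(lam^2)/(2*V)) := by
      apply Real.exp_le_exp.mpr
      rw [div_le_div_iff₀ (by linarith) (by linarith)]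
      nlinarith [sq_nonneg lam]
    have hsub : {x : ℝ | lam ≤ |x|} ⊆ {x : ℝ | lam ≤ x} ∪ {x : ℝ | x ≤ -lam} := by
      intro x hx
      rcases abs_cases x with ⟨h1, h2⟩ | ⟨h1, h2⟩
      · left; exact h1 ▸ hx
      · right; simp only [Set.mem_setOf_eq] at hx ⊢; rw [h1] at hx; linarith
    have hupper := gaussian_upper_tail hv hlam
    have hlower : gaussianReal 0 v {x : ℝ | x ≤ -lam}
        ≤ ENNReal.ofReal (Real.exp (-(lam^2)/(2*(v:ℝ)))) := by
      have hpre : {x : ℝ | x ≤ -lam} = (fun x : ℝ => -1 * x) ⁻¹' Set.Ici lam := by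
        ext x
        simp only [Set.mem_setOf_eq, Set.mem_preimage, Set.mem_Ici]
        constructor <;> intro h <;> linarith
      rw [hpre, ← Measure.map_apply (f := fun x : ℝ => -1 * x) (by fun_prop)
        (measurableSet_Ici (a := lam))]
      have hmap := gaussianReal_map_const_mul (μ := 0) (v := v) (-1)
      rw [show (fun x : ℝ => -1 * x) = ((-1 : ℝ) * ·) from rfl, hmap]
      convert gaussian_upper_tail hv hlam using 3
      · norm_num
      · ext
        push_cast
        norm_num
      · rfl
    calc gaussianReal 0 v {x : ℝ | lam ≤ |x|}
        ≤ gaussianReal 0 v ({x : ℝ | lam ≤ x} ∪ {x : ℝ | x ≤ -lam}) := measure_mono hsub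
      _ ≤ gaussianReal 0 v {x : ℝ | lam ≤ x} + gaussianReal 0 v {x : ℝ | x ≤ -lam} :=
          measure_union_le _ _
      _ ≤ ENNReal.ofReal (Real.exp (-(lam^2)/(2*(v:ℝ))))
          + ENNReal.ofReal (Real.exp (-(lam^2)/(2*(v:ℝ)))) := add_le_add hupper hlower
      _ ≤ ENNReal.ofReal (2 * Real.exp (-(lam^2)/(2*V))) := by
          rw [← ENNReal.ofReal_add (Real.exp_nonneg _) (Real.exp_nonneg _)]
          · apply ENNReal.ofReal_le_ofReal; linarith

lemma soft_sign {lam z u w b : ℝ} (hlam : 0 < lam) (hw : |w| < lam) (hz : z = b + w)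
    (hsig : b ≠ 0 → 2*lam ≤ |b|)
    (hmin1 : ∀ t, (1/2)*u^2 - z*u + lam*|u| ≤ (1/2)*t^2 - z*t + lam*|t|) :
    Real.sign u = Real.sign b := by
  rcases lt_trichotomy b 0 with hb | hb | hb
  · -- b < 0 : z < -lam, show u < 0
    have hblam : 2*lam ≤ -b := by
      have := hsig (ne_of_lt hb)
      rwa [abs_of_neg hb] at this
    have hzneg : z < -lam := by
      have := abs_lt.mp hw
      rw [hz]; linarith
    have hneg : u < 0 := by
      by_contra h
      push_neg at h
      have h1 := hmin1 (z + lam)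
      rw [abs_of_nonpos (by linarith : z + lam ≤ 0), abs_of_nonneg h] at h1
      nlinarith [sq_nonneg u, sq_nonneg (z + lam)]
    rw [Real.sign_of_neg hneg, Real.sign_of_neg hb]
  · -- b = 0 : |z| < lam, show u = 0
    subst hb
    have hzabs : |z| < lam := by rw [hz, zero_add]; exact hw
    have hu0 : u = 0 := by
      by_contra h
      have h1 := hmin1 0
      simp only [abs_zero, mul_zero, zero_pow, ne_eq, OfNat.ofNat_ne_zero,
        not_false_eq_true, add_zero] at h1
      have h2 : z * u ≤ |z| * |u| := by rw [← abs_mul]; exact le_abs_self _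
      have h3 : 0 < |u| := abs_pos.mpr h
      have h4 : 0 < (lam - |z|) * |u| := mul_pos (by linarith) h3
      nlinarith [sq_nonneg u]
    rw [hu0]
  · -- b > 0 : z > lam, show u > 0
    have hblam : 2*lam ≤ b := by
      have := hsig (ne_of_gt hb)
      rwa [abs_of_pos hb] at this
    have hzpos : lam < z := by
      have := abs_lt.mp hw
      rw [hz]; linarith
    have hpos : 0 < u := by
      by_contra h
      push_neg at h
      have h1 := hmin1 (z - lam)
      rw [abs_of_nonneg (by linarith : (0:ℝ) ≤ z - lam), abs_of_nonpos h] at h1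
      nlinarith [sq_nonneg u, sq_nonneg (z - lam)]
    rw [Real.sign_of_pos hpos, Real.sign_of_pos hb]

lemma quad_expand {n p : ℕ} (A : Matrix (Fin n) (Fin p) ℝ) (hA : Aᵀ * A = 1)
    (y : Fin n → ℝ) (c : Fin p → ℝ) :
    ∑ i, (y i - A.mulVec c i)^2
      = ∑ i, (y i)^2 - 2 * ∑ j, (Aᵀ.mulVec y j) * c j + ∑ j, (c j)^2 := by
  have h1 : ∑ i, y i * A.mulVec c i = ∑ j, Aᵀ.mulVec y j * c j := by
    have : y ⬝ᵥ A.mulVec c = Aᵀ.mulVec y ⬝ᵥ c := by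
      rw [Matrix.dotProduct_mulVec, Matrix.mulVec_transpose]
    exact this
  have h2 : ∑ i, (A.mulVec c i)^2 = ∑ j, (c j)^2 := by
    have e1 : A.mulVec c ⬝ᵥ A.mulVec c = c ⬝ᵥ c := by
      rw [Matrix.dotProduct_mulVec, ← Matrix.mulVec_transpose, Matrix.mulVec_mulVec, hA,
        Matrix.one_mulVec]
    simpa [dotProduct, pow_two] using e1
  have expand : ∀ i ∈ Finset.univ, (y i - A.mulVec c i)^2
      = ((y i)^2 - 2*(y i * A.mulVec c i)) + (A.mulVec c i)^2 := fun i _ => by ring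
  rw [Finset.sum_congr rfl expand, Finset.sum_add_distrib, Finset.sum_sub_distrib,
    ← Finset.mul_sum, h1, h2]

lemma coord_min {p : ℕ} (z : Fin p → ℝ) (lam : ℝ) (u : Fin p → ℝ)
    (hg : ∀ b : Fin p → ℝ, ∑ k, ((1/2)*(u k)^2 - z k * u k + lam * |u k|)
          ≤ ∑ k, ((1/2)*(b k)^2 - z k * b k + lam * |b k|))
    (j : Fin p) (t : ℝ) :
    (1/2)*(u j)^2 - z j * u j + lam*|u j| ≤ (1/2)*t^2 - z j * t + lam*|t| := by
  classical
  have h := hg (Function.update u j t)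
  have hupd : ∀ k, (1/2)*((Function.update u j t) k)^2 - z k * (Function.update u j t) k
        + lam * |(Function.update u j t) k|
      = Function.update (fun k => (1/2)*(u k)^2 - z k * u k + lam*|u k|) j
          ((1/2)*t^2 - z j * t + lam*|t|) k :=
    fun k => Function.apply_update (fun k s => (1/2)*s^2 - z k * s + lam*|s|) u j t k
  rw [Finset.sum_congr rfl (fun k _ => hupd k), Finset.sum_update_of_mem (Finset.mem_univ j),
    Finset.sum_eq_sum_sdiff_singleton_add (Finset.mem_univ j)
      (fun k => (1/2)*(u k)^2 - z k * u k + lam*|u k|)] at h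
  linarith

end Aux

/-- **Sign consistency of the preconditioned Lasso, low-dimensional case.**
For the linear model `Y = X β* + ε`, `ε ∼ N(0, σ² I_n)`, `n ≥ p`, `rank X = p`,
`Λ_min(n⁻¹ XᵀX) ≥ C̃_min > 0`, let `F = U D⁻¹ Uᵀ` be the Puffer transform and
`β̃(λ)` any minimizer of the preconditioned Lasso objective
`(1/2)‖FY − FX b‖² + λ‖b‖₁`.  If `min_{j∈S} |β*_j| ≥ 2λ`, then
`sign(β̃(λ)) = sign(β*)` with probability at least
`1 − 2p·exp(−n λ² C̃_min/(2σ²))`. -/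
theorem preconditioned_lasso_sign_consistency_low_dim
    {Ω : Type*} [MeasurableSpace Ω] (P : Measure Ω) [IsProbabilityMeasure P]
    (n p : ℕ) (hnp : p ≤ n) (hp : 1 ≤ p)
    (X : Matrix (Fin n) (Fin p) ℝ) (hrank : X.rank = p)
    (U : Matrix (Fin n) (Fin p) ℝ) (d : Fin p → ℝ) (V : Matrix (Fin p) (Fin p) ℝ)
    (hd : ∀ i, 0 < d i)
    (hU : Uᵀ * U = 1) (hV : Vᵀ * V = 1) (hV' : V * Vᵀ = 1)
    (hSVD : X = U * Matrix.diagonal d * Vᵀ)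
    (Cmin : ℝ) (hCmin : 0 < Cmin)
    (heig : ∀ v : Fin p → ℝ,
      Cmin * (∑ j, v j ^ 2) ≤ (1 / (n : ℝ)) * (v ⬝ᵥ (Xᵀ * X).mulVec v))
    (F : Matrix (Fin n) (Fin n) ℝ) (hF : F = U * (Matrix.diagonal d)⁻¹ * Uᵀ)
    (σ : ℝ) (hσ : 0 < σ)
    (βstar : Fin p → ℝ)
    (ε : Ω → Fin n → ℝ)
    (hε : IsGaussianVector P ε 0 (σ ^ 2 • (1 : Matrix (Fin n) (Fin n) ℝ)))
    (Y : Ω → Fin n → ℝ) (hY : ∀ ω, Y ω = X.mulVec βstar + ε ω)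
    (lam : ℝ) (hlam : 0 < lam)
    (hsignal : ∀ j, βstar j ≠ 0 → 2 * lam ≤ |βstar j|)
    (βhat : Ω → Fin p → ℝ)
    (hmin : ∀ ω, ∀ b : Fin p → ℝ,
      (1 / 2) * (∑ i, (F.mulVec (Y ω) i - (F * X).mulVec (βhat ω) i) ^ 2)
          + lam * ∑ j, |βhat ω j|
        ≤ (1 / 2) * (∑ i, (F.mulVec (Y ω) i - (F * X).mulVec b i) ^ 2)
          + lam * ∑ j, |b j|) :
    P {ω | ∀ j, Real.sign (βhat ω j) = Real.sign (βstar j)}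
      ≥ ENNReal.ofReal (1 - 2 * p
          * Real.exp (-((n : ℝ) * lam ^ 2 * Cmin) / (2 * σ ^ 2))) := by
  classical
  have hnpos : (0:ℝ) < (n:ℝ) := by
    have : (1:ℕ) ≤ n := le_trans hp hnp
    exact_mod_cast Nat.lt_of_lt_of_le Nat.zero_lt_one this
  -- diagonal inverse
  set E : Matrix (Fin p) (Fin p) ℝ := Matrix.diagonal (fun i => (d i)⁻¹) with hEdef
  have hDE : Matrix.diagonal d * E = 1 := by
    rw [hEdef, Matrix.diagonal_mul_diagonal,
      show (fun i => d i * (d i)⁻¹) = fun _ => (1:ℝ) from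
        funext fun i => mul_inv_cancel₀ (hd i).ne', Matrix.diagonal_one]
  have hED : E * Matrix.diagonal d = 1 := by
    rw [hEdef, Matrix.diagonal_mul_diagonal,
      show (fun i => (d i)⁻¹ * d i) = fun _ => (1:ℝ) from
        funext fun i => inv_mul_cancel₀ (hd i).ne', Matrix.diagonal_one]
  have hInv : (Matrix.diagonal d)⁻¹ = E := Matrix.inv_eq_right_inv hDE
  have hFX : F * X = U * Vᵀ := by
    rw [hF, hSVD, hInv]
    calc U * E * Uᵀ * (U * Matrix.diagonal d * Vᵀ)
        = U * (E * ((Uᵀ * U) * (Matrix.diagonal d * Vᵀ))) := by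
          simp only [Matrix.mul_assoc]
      _ = U * Vᵀ := by
          rw [hU, Matrix.one_mul, ← Matrix.mul_assoc E, hED, Matrix.one_mul]
  have hAtA : (F * X)ᵀ * (F * X) = 1 := by
    rw [hFX, Matrix.transpose_mul, Matrix.transpose_transpose, Matrix.mul_assoc,
      ← Matrix.mul_assoc Uᵀ, hU, Matrix.one_mul, hV']
  set M : Matrix (Fin p) (Fin n) ℝ := (F * X)ᵀ * F with hMdef
  have hM : M = V * (E * Uᵀ) := by
    rw [hMdef, hFX, hF, hInv, Matrix.transpose_mul, Matrix.transpose_transpose]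
    calc V * Uᵀ * (U * E * Uᵀ)
        = V * ((Uᵀ * U) * (E * Uᵀ)) := by simp only [Matrix.mul_assoc]
      _ = V * (E * Uᵀ) := by rw [hU, Matrix.one_mul]
  -- row sums of squares of M
  have hMM : ∀ j, ∑ i, (M j i)^2 = ∑ k, (V j k)^2 * ((d k)⁻¹)^2 := by
    intro j
    have h5 : M * Mᵀ = V * (Matrix.diagonal (fun k => (d k)⁻¹ * (d k)⁻¹) * Vᵀ) := by
      rw [hM, Matrix.transpose_mul, Matrix.transpose_mul, Matrix.transpose_transpose,
        hEdef, Matrix.diagonal_transpose]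
      simp only [Matrix.mul_assoc]
      rw [← Matrix.mul_assoc Uᵀ U, hU, Matrix.one_mul,
        ← Matrix.mul_assoc (Matrix.diagonal fun i => (d i)⁻¹), Matrix.diagonal_mul_diagonal]
    have h6 : ∑ i, (M j i)^2 = (M * Mᵀ) j j := by
      rw [Matrix.mul_apply]
      exact Finset.sum_congr rfl fun i _ => by rw [Matrix.transpose_apply, pow_two]
    rw [h6, h5, Matrix.mul_apply]
    exact Finset.sum_congr rfl fun k _ => by
      rw [Matrix.diagonal_mul, Matrix.transpose_apply]; ring
  -- singular values bounded below
  have hd2 : ∀ k, (n:ℝ) * Cmin ≤ (d k)^2 := by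
    intro k
    have hXtX : Xᵀ * X = V * (Matrix.diagonal (fun k => d k * d k) * Vᵀ) := by
      rw [hSVD, Matrix.transpose_mul, Matrix.transpose_mul, Matrix.transpose_transpose,
        Matrix.diagonal_transpose]
      simp only [Matrix.mul_assoc]
      rw [← Matrix.mul_assoc Uᵀ U, hU, Matrix.one_mul,
        ← Matrix.mul_assoc (Matrix.diagonal d), Matrix.diagonal_mul_diagonal]
    have hc1 : ∑ j', (V j' k)^2 = 1 := by
      have h := congrFun (congrFun hV k) k
      rw [Matrix.mul_apply, Matrix.one_apply_eq] at h
      rw [← h]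
      exact Finset.sum_congr rfl fun j' _ => by rw [Matrix.transpose_apply, pow_two]
    have hek : Vᵀ.mulVec (fun j' => V j' k) = fun l => (Vᵀ * V) l k := by
      funext l
      rw [Matrix.mulVec, dotProduct, Matrix.mul_apply]
    have hc2 : (fun j' => V j' k) ⬝ᵥ (Xᵀ * X).mulVec (fun j' => V j' k) = d k * d k := by
      rw [hXtX, ← Matrix.mulVec_mulVec, ← Matrix.mulVec_mulVec,
        Matrix.dotProduct_mulVec, ← Matrix.mulVec_transpose, hek, hV]
      simp [Matrix.mulVec_diagonal, dotProduct, Matrix.one_apply]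
    have h := heig (fun j' => V j' k)
    rw [hc1, hc2, mul_one] at h
    rw [pow_two]
    rw [div_mul_eq_mul_div, le_div_iff₀ hnpos] at h
    linarith
  have hVV : ∀ j, ∑ k, (V j k)^2 = 1 := by
    intro j
    have h := congrFun (congrFun hV' j) j
    rw [Matrix.mul_apply, Matrix.one_apply_eq] at h
    rw [← h]
    exact Finset.sum_congr rfl fun k _ => by rw [Matrix.transpose_apply, pow_two]
  have hnC : 0 < (n:ℝ) * Cmin := mul_pos hnpos hCmin
  have hMbound : ∀ j, σ^2 * ∑ i, (M j i)^2 ≤ σ^2 / ((n:ℝ) * Cmin) := by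
    intro j
    rw [hMM j]
    have hterm : ∀ k, (V j k)^2 * ((d k)⁻¹)^2 ≤ (V j k)^2 * (1 / ((n:ℝ) * Cmin)) := by
      intro k
      apply mul_le_mul_of_nonneg_left _ (sq_nonneg _)
      have hdk2 : 0 < (d k)^2 := pow_pos (hd k) 2
      rw [inv_pow, inv_eq_one_div, div_le_div_iff₀ hdk2 hnC]
      have := hd2 k
      nlinarith
    calc σ^2 * ∑ k, (V j k)^2 * ((d k)⁻¹)^2
        ≤ σ^2 * ∑ k, (V j k)^2 * (1 / ((n:ℝ) * Cmin)) := by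
          apply mul_le_mul_of_nonneg_left _ (sq_nonneg σ)
          exact Finset.sum_le_sum fun k _ => hterm k
      _ = σ^2 / ((n:ℝ) * Cmin) := by
          rw [← Finset.sum_mul, hVV j]
          field_simp
  -- decomposition of z
  set zz : Ω → Fin p → ℝ := fun ω => βstar + M.mulVec (ε ω) with hzzdef
  have hz : ∀ ω, (F * X)ᵀ.mulVec (F.mulVec (Y ω)) = zz ω := by
    intro ω
    rw [hY ω, Matrix.mulVec_add, Matrix.mulVec_add, Matrix.mulVec_mulVec,
      Matrix.mulVec_mulVec, Matrix.mulVec_mulVec, Matrix.mul_assoc ((F * X)ᵀ) F X, hAtA,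
      Matrix.one_mulVec]
  -- deterministic inclusion
  set q : ℝ := 2 * Real.exp (-((n : ℝ) * lam ^ 2 * Cmin) / (2 * σ ^ 2)) with hqdef
  set Eset : Set Ω := {ω | ∀ j, |M.mulVec (ε ω) j| < lam} with hEsetdef
  have hdet : Eset ⊆ {ω | ∀ j, Real.sign (βhat ω j) = Real.sign (βstar j)} := by
    intro ω hω
    have hgb : ∀ b : Fin p → ℝ,
        ∑ k, ((1/2)*(βhat ω k)^2 - zz ω k * βhat ω k + lam * |βhat ω k|)
          ≤ ∑ k, ((1/2)*(b k)^2 - zz ω k * b k + lam * |b k|) := by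
      intro b
      have hm := hmin ω b
      have e1 := quad_expand (F*X) hAtA (F.mulVec (Y ω)) (βhat ω)
      have e2 := quad_expand (F*X) hAtA (F.mulVec (Y ω)) b
      rw [e1, e2, hz ω] at hm
      have hsplit : ∀ c : Fin p → ℝ, ∑ k, ((1/2)*(c k)^2 - zz ω k * c k + lam*|c k|)
          = (1/2)*(∑ k, (c k)^2) - ∑ k, zz ω k * c k + lam * ∑ k, |c k| := by
        intro c
        rw [Finset.sum_add_distrib, Finset.sum_sub_distrib, ← Finset.mul_sum, ← Finset.mul_sum]
      rw [hsplit (βhat ω), hsplit b]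
      nlinarith [hm]
    intro j
    refine soft_sign hlam (hω j) rfl (hsignal j)
      (fun t => coord_min (zz ω) lam (βhat ω) hgb j t)
  -- tail bound per coordinate
  have htail : ∀ j, P {ω | lam ≤ |M.mulVec (ε ω) j|} ≤ ENNReal.ofReal q := by
    intro j
    have hlaw := hε (fun i => M j i)
    have hmean : (∑ i, M j i * (0 : Fin n → ℝ) i) = 0 := by simp
    have hvar : (fun i => M j i) ⬝ᵥ (σ ^ 2 • (1 : Matrix (Fin n) (Fin n) ℝ)).mulVec
        (fun i => M j i) = σ^2 * ∑ i, (M j i)^2 := by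
      rw [Matrix.smul_mulVec, Matrix.one_mulVec, dotProduct_smul]
      simp only [smul_eq_mul]
      congr 1
      rw [dotProduct]
      exact Finset.sum_congr rfl fun i _ => (pow_two _).symm
    rw [hmean, hvar] at hlaw
    have hne : AEMeasurable (fun ω => ∑ i, M j i * ε ω i) P := by
      by_contra hcon
      rw [Measure.map_of_not_aemeasurable hcon] at hlaw
      have h0 := congrArg (fun μ : Measure ℝ => μ Set.univ) hlaw
      simp [measure_univ] at h0
    have hset : MeasurableSet {x : ℝ | lam ≤ |x|} :=
      (isClosed_le continuous_const continuous_abs).measurableSet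
    have hpre : {ω | lam ≤ |M.mulVec (ε ω) j|}
        = (fun ω => ∑ i, M j i * ε ω i) ⁻¹' {x | lam ≤ |x|} := rfl
    rw [hpre, ← Measure.map_apply_of_aemeasurable hne hset, hlaw]
    have hVmax : (0:ℝ) < σ^2 / ((n:ℝ)*Cmin) := by positivity
    have hvle : ((Real.toNNReal (σ^2 * ∑ i, (M j i)^2)) : ℝ) ≤ σ^2 / ((n:ℝ)*Cmin) := by
      rw [Real.coe_toNNReal']
      exact max_le (hMbound j) (le_of_lt hVmax)
    refine le_trans (gaussian_abs_tail hVmax hvle hlam) (le_of_eq ?_)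
    have hexp : -(lam^2)/(2*(σ^2/((n:ℝ)*Cmin))) = -((n:ℝ) * lam ^ 2 * Cmin) / (2 * σ ^ 2) := by
      rw [div_eq_div_iff (by positivity) (by positivity)]
      field_simp
    rw [hexp, hqdef]
  -- assemble
  have hcomplsub : Esetᶜ ⊆ ⋃ j, {ω | lam ≤ |M.mulVec (ε ω) j|} := by
    intro ω hω
    simp only [hEsetdef, Set.mem_compl_iff, Set.mem_setOf_eq, not_forall, not_lt] at hω
    obtain ⟨j, hj⟩ := hω
    exact Set.mem_iUnion.mpr ⟨j, hj⟩
  have hPcompl : P Esetᶜ ≤ (p : ENNReal) * ENNReal.ofReal q := by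
    calc P Esetᶜ ≤ P (⋃ j, {ω | lam ≤ |M.mulVec (ε ω) j|}) := measure_mono hcomplsub
      _ ≤ ∑' j, P {ω | lam ≤ |M.mulVec (ε ω) j|} := measure_iUnion_le _
      _ = ∑ j : Fin p, P {ω | lam ≤ |M.mulVec (ε ω) j|} := tsum_fintype _
      _ ≤ ∑ _j : Fin p, ENNReal.ofReal q := Finset.sum_le_sum fun j _ => htail j
      _ = (p : ENNReal) * ENNReal.ofReal q := by
          rw [Finset.sum_const, Finset.card_univ, Fintype.card_fin, nsmul_eq_mul]
  have hq0 : 0 ≤ q := by positivity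
  have hPq : (p : ENNReal) * ENNReal.ofReal q = ENNReal.ofReal ((p:ℝ) * q) := by
    rw [ENNReal.ofReal_mul (p := (p:ℝ)) (Nat.cast_nonneg p), ENNReal.ofReal_natCast]
  have h1le : (1 : ENNReal) ≤ P Eset + ENNReal.ofReal ((p:ℝ) * q) := by
    calc (1 : ENNReal) = P Set.univ := measure_univ.symm
      _ = P (Eset ∪ Esetᶜ) := by rw [Set.union_compl_self]
      _ ≤ P Eset + P Esetᶜ := measure_union_le _ _
      _ ≤ P Eset + ENNReal.ofReal ((p:ℝ) * q) := by
          exact add_le_add le_rfl (le_trans hPcompl (le_of_eq hPq))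
  have hgoal : ENNReal.ofReal (1 - 2 * p
      * Real.exp (-((n : ℝ) * lam ^ 2 * Cmin) / (2 * σ ^ 2))) ≤ P Eset := by
    have heq : (1 : ℝ) - 2 * p * Real.exp (-((n : ℝ) * lam ^ 2 * Cmin) / (2 * σ ^ 2))
        = 1 - (p:ℝ) * q := by rw [hqdef]; ring
    rw [heq, ENNReal.ofReal_sub _ (by positivity), ENNReal.ofReal_one]
    exact tsub_le_iff_right.mpr h1le
  exact le_trans hgoal (measure_mono hdet)
end
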